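/- arXiv:math/0509270 — 5 statements merged into one kernel-verified Lean document; each statement's English description precedes it below -/
import Mathlib

section
/- Let T ⊆ ℝ be closed and unbounded above, with inf T = a > −∞. Suppose ξ is a càdlàg T-valued martingale with ξ_0 = x, (ξ_t² − t) a martingale, and ξ does not skip points (property I'). Then for b ∈ T with x < b and T_b = inf{t : ξ_t ∉ [a,b]}, one has E[t ∧ T_b] ≤ a² ∨ b² − x², T_b < ∞ a.s., ξ_{T_b} = b a.s., and the bounded martingale (ξ_{t∧T_b}) yields the contradiction b = x. Hence no such process exists when T is bounded below. -/
open MeasureTheory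

open scoped NNReal

/-- Property (I'): the path `f` does not skip over points of `T`. -/
def SkipFree (T : Set ℝ) (f : ℝ≥0 → ℝ) : Prop :=
  ∀ x y z : ℝ, x ∈ T → y ∈ T → z ∈ T → x < y → y < z →
    ∀ r t : ℝ≥0, r < t →
      ((f r = x ∧ f t = z) ∨ (f r = z ∧ f t = x)) →
        ∃ s : ℝ≥0, r ≤ s ∧ s ≤ t ∧ f s = y

open Filter Topology

namespace NoLB

variable {Ω : Type*}

/-- grid point `j / 2^k` in `ℝ≥0`. -/
noncomputable def gp (k j : ℕ) : ℝ≥0 := (j : ℝ≥0) / 2 ^ k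

lemma gp_mono {k : ℕ} : Monotone (gp k) := fun i j hij => by
  unfold gp
  gcongr


lemma gp_le_iff {k j m : ℕ} : gp k j ≤ (m : ℝ≥0) ↔ j ≤ m * 2 ^ k := by
  unfold gp
  rw [div_le_iff₀ (by positivity)]
  norm_cast

lemma gp_mul_top (k n : ℕ) : gp k (n * 2 ^ k) = (n : ℝ≥0) := by
  unfold gp
  rw [div_eq_iff (by positivity)]
  push_cast
  ring

lemma gp_succ_double (k j : ℕ) : gp (k + 1) (2 * j) = gp k j := by
  unfold gp
  rw [div_eq_div_iff (by positivity) (by positivity)]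
  push_cast
  ring

/-- the predicate for the search of the first grid point (level `k`, horizon `n`)
where `ξ` exceeds `b`. -/
def P (ξ : ℝ≥0 → Ω → ℝ) (b : ℝ) (n k : ℕ) (ω : Ω) (j : ℕ) : Prop :=
  j = n * 2 ^ k ∨ (j ≤ n * 2 ^ k ∧ b < ξ (gp k j) ω)

lemma exP (ξ : ℝ≥0 → Ω → ℝ) (b : ℝ) (n k : ℕ) (ω : Ω) : ∃ j, P ξ b n k ω j :=
  ⟨n * 2 ^ k, Or.inl rfl⟩

open Classical in
/-- index of the first grid point of level `k` where `ξ` exceeds `b` (or the horizon). -/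
noncomputable def J (ξ : ℝ≥0 → Ω → ℝ) (b : ℝ) (n k : ℕ) (ω : Ω) : ℕ :=
  Nat.find (exP ξ b n k ω)

/-- the grid stopping time. -/
noncomputable def gst (ξ : ℝ≥0 → Ω → ℝ) (b : ℝ) (n k : ℕ) (ω : Ω) : ℝ≥0 :=
  gp k (J ξ b n k ω)

variable {ξ : ℝ≥0 → Ω → ℝ} {b : ℝ} {n k : ℕ} {ω : Ω}

lemma J_spec : P ξ b n k ω (J ξ b n k ω) := by
  classical
  exact Nat.find_spec (exP ξ b n k ω)

lemma J_min {j : ℕ} (h : j < J ξ b n k ω) : ¬ P ξ b n k ω j := by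
  classical
  exact Nat.find_min (exP ξ b n k ω) h

lemma J_le {j : ℕ} (h : P ξ b n k ω j) : J ξ b n k ω ≤ j := by
  classical
  exact Nat.find_le h

lemma J_le_top : J ξ b n k ω ≤ n * 2 ^ k := J_le (Or.inl rfl)

lemma gst_le_horizon : gst ξ b n k ω ≤ (n : ℝ≥0) := by
  rw [gst, gp_le_iff]
  exact J_le_top

lemma gst_mem_grid : ∃ j ≤ n * 2 ^ k, gst ξ b n k ω = gp k j :=
  ⟨_, J_le_top, rfl⟩

lemma gst_succ_le : gst ξ b n (k + 1) ω ≤ gst ξ b n k ω := by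
  rcases J_spec (ξ := ξ) (b := b) (n := n) (k := k) (ω := ω) with h | ⟨hle, hb⟩
  · calc gst ξ b n (k+1) ω ≤ (n : ℝ≥0) := gst_le_horizon
      _ = gst ξ b n k ω := by rw [gst, h, gp_mul_top]
  · have hP : P ξ b n (k+1) ω (2 * J ξ b n k ω) :=
      Or.inr ⟨by calc 2 * J ξ b n k ω ≤ 2 * (n * 2 ^ k) := by omega
                _ = n * 2 ^ (k+1) := by ring,
        by rwa [gp_succ_double]⟩
    calc gst ξ b n (k+1) ω = gp (k+1) (J ξ b n (k+1) ω) := rfl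
      _ ≤ gp (k+1) (2 * J ξ b n k ω) := gp_mono (J_le hP)
      _ = gp k (J ξ b n k ω) := gp_succ_double _ _
      _ = gst ξ b n k ω := rfl

lemma gst_antitone : Antitone (fun k => gst ξ b n k ω) :=
  antitone_nat_of_succ_le fun _ => gst_succ_le

section Stopping

variable {m0 : MeasurableSpace Ω} {ℱ : Filtration ℝ≥0 m0}
variable {ξ : ℝ≥0 → Ω → ℝ} {b : ℝ} {n k : ℕ}

/-- the hitting event `{J = j}` is determined by `ξ` at grid times `≤ gp k j`. -/
lemma J_eq_iff {ω : Ω} {j : ℕ} (hj : j ≤ n * 2 ^ k) :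
    J ξ b n k ω = j ↔ P ξ b n k ω j ∧ ∀ i < j, ¬ P ξ b n k ω i := by
  classical
  exact Nat.find_eq_iff (exP ξ b n k ω)

lemma measurable_hit (hadp : Adapted ℱ ξ) (k j : ℕ) :
    MeasurableSet[ℱ (gp k j)] {ω | b < ξ (gp k j) ω} := by
  have : Measurable[ℱ (gp k j)] (ξ (gp k j)) := (hadp (gp k j))
  exact this measurableSet_Ioi

lemma measurable_J_eq (hadp : Adapted ℱ ξ) {j : ℕ} (hj : j ≤ n * 2 ^ k) :
    MeasurableSet[ℱ (gp k j)] {ω | J ξ b n k ω = j} := by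
  have hset : {ω | J ξ b n k ω = j}
      = {ω | P ξ b n k ω j} ∩ ⋂ (i : ℕ) (_ : i < j), {ω | ¬ P ξ b n k ω i} := by
    ext ω
    simp only [Set.mem_setOf_eq, Set.mem_inter_iff, Set.mem_iInter, J_eq_iff hj]
  rw [hset]
  have hPmeas : ∀ i ≤ j, MeasurableSet[ℱ (gp k j)] {ω | P ξ b n k ω i} := by
    intro i hij
    have : {ω | P ξ b n k ω i} =
        if h : i = n * 2 ^ k then Set.univ
        else if h2 : i ≤ n * 2 ^ k then {ω | b < ξ (gp k i) ω} else ∅ := by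
      ext ω; unfold P
      split_ifs with h h2
      · simp [h]
      · simp [h, h2]
      · simp [h, h2]
    rw [this]
    split_ifs with h h2
    · exact @MeasurableSet.univ _ (ℱ (gp k j))
    · exact ℱ.mono (gp_mono hij) _ (measurable_hit hadp k i)
    · exact @MeasurableSet.empty _ (ℱ (gp k j))
  refine (hPmeas j le_rfl).inter ?_
  refine MeasurableSet.iInter fun i => MeasurableSet.iInter fun hi => ?_
  exact (hPmeas i hi.le).compl

lemma gst_isStoppingTime (hadp : Adapted ℱ ξ) :
    IsStoppingTime ℱ (fun ω => (gst ξ b n k ω : WithTop ℝ≥0)) := by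
  intro t
  simp only [WithTop.coe_le_coe]
  have hset : {ω | gst ξ b n k ω ≤ t}
      = ⋃ (j : ℕ) (_ : j ∈ Finset.range (n * 2 ^ k + 1)) (_ : gp k j ≤ t),
          {ω | J ξ b n k ω = j} := by
    ext ω
    simp only [Set.mem_setOf_eq, Set.mem_iUnion, Finset.mem_range]
    constructor
    · intro h
      exact ⟨J ξ b n k ω, by have := J_le_top (ξ := ξ) (b := b) (n := n) (k := k) (ω := ω); omega,
        h, rfl⟩
    · rintro ⟨j, _, hle, rfl⟩
      exact hle
  rw [hset]
  refine MeasurableSet.iUnion fun j => MeasurableSet.iUnion fun hj =>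
    MeasurableSet.iUnion fun hle => ?_
  exact ℱ.mono hle _ (measurable_J_eq hadp (by simpa [Nat.lt_succ_iff] using hj))

lemma gst_countable_range :
    (Set.range (fun ω => (gst ξ b n k ω : WithTop ℝ≥0))).Countable := by
  have : Set.range (fun ω => (gst ξ b n k ω : WithTop ℝ≥0))
      ⊆ Set.range (fun j => (gp k j : WithTop ℝ≥0)) := by
    rintro q ⟨ω, rfl⟩
    exact ⟨J ξ b n k ω, rfl⟩
  exact (Set.countable_range _).mono this

/-- if no grid value at level `k` exceeds `b`, the stopping time equals the horizon. -/
lemma gst_eq_horizon {ω : Ω} (h : ∀ j ≤ n * 2 ^ k, ¬ b < ξ (gp k j) ω) :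
    gst ξ b n k ω = (n : ℝ≥0) := by
  have : J ξ b n k ω = n * 2 ^ k := by
    rw [J_eq_iff le_rfl]
    refine ⟨Or.inl rfl, fun i hi hP => ?_⟩
    rcases hP with h1 | ⟨h2, h3⟩
    · omega
    · exact h i h2 h3
  rw [gst, this, gp_mul_top]

/-- if the hit really occurs (at some level `k₁ ≤ k`), then the value at the stopping time
exceeds `b`. -/
lemma lt_gst_value {ω : Ω} {k₁ j₁ : ℕ} (hk : k₁ ≤ k) (hj₁ : j₁ ≤ n * 2 ^ k₁)
    (hb : b < ξ (gp k₁ j₁) ω) : b < ξ (gst ξ b n k ω) ω := by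
  -- the grid point of level k₁ appears in level k
  have hgp : gp k (j₁ * 2 ^ (k - k₁)) = gp k₁ j₁ := by
    unfold gp
    rw [div_eq_div_iff (by positivity) (by positivity)]
    push_cast
    rw [mul_assoc, ← pow_add, Nat.sub_add_cancel hk]
  have hle : j₁ * 2 ^ (k - k₁) ≤ n * 2 ^ k := by
    calc j₁ * 2 ^ (k - k₁) ≤ (n * 2 ^ k₁) * 2 ^ (k - k₁) := Nat.mul_le_mul_right _ hj₁
      _ = n * 2 ^ k := by rw [mul_assoc, ← pow_add, Nat.add_sub_cancel' hk]
  have hP : P ξ b n k ω (j₁ * 2 ^ (k - k₁)) := Or.inr ⟨hle, by rwa [hgp]⟩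
  rcases J_spec (ξ := ξ) (b := b) (n := n) (k := k) (ω := ω) with h | ⟨_, h⟩
  · have h1 : J ξ b n k ω ≤ j₁ * 2 ^ (k - k₁) := J_le hP
    have h2 : j₁ * 2 ^ (k - k₁) = J ξ b n k ω := le_antisymm (h ▸ hle) h1
    rw [gst, ← h2, hgp]
    exact hb
  · exact h

end Stopping

section Path

variable {ξ : ℝ≥0 → Ω → ℝ} {T : Set ℝ} {x b c : ℝ} {n : ℕ} {ω : Ω}

lemma gst_tendsto :
    Tendsto (fun k => gst ξ b n k ω) atTop (𝓝 (⨅ k, gst ξ b n k ω)) :=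
  tendsto_atTop_ciInf gst_antitone (OrderBot.bddBelow _)

lemma iInf_gst_le (k : ℕ) : (⨅ k, gst ξ b n k ω) ≤ gst ξ b n k ω :=
  ciInf_le (OrderBot.bddBelow _) k

lemma iInf_gst_le_horizon : (⨅ k, gst ξ b n k ω) ≤ (n : ℝ≥0) :=
  le_trans (iInf_gst_le 0) gst_le_horizon

lemma gst_val_tendsto (hrcω : ∀ t, ContinuousWithinAt (fun s => ξ s ω) (Set.Ici t) t) :
    Tendsto (fun k => ξ (gst ξ b n k ω) ω) atTop (𝓝 (ξ (⨅ k, gst ξ b n k ω) ω)) := by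
  refine (hrcω _).tendsto.comp ?_
  exact tendsto_nhdsWithin_of_tendsto_nhds_of_eventually_within _ gst_tendsto
    (Eventually.of_forall fun k => iInf_gst_le k)

lemma exists_gp_mem {s d : ℝ≥0} (hsd : s < d) (hdn : d ≤ (n : ℝ≥0)) :
    ∃ k j, j ≤ n * 2 ^ k ∧ s ≤ gp k j ∧ gp k j < d := by
  have hds : 0 < d - s := tsub_pos_of_lt hsd
  obtain ⟨k, hk⟩ : ∃ k : ℕ, ((2 : ℝ≥0) ^ k)⁻¹ < d - s := by
    obtain ⟨k, hk⟩ := exists_pow_lt_of_lt_one hds (by rw [inv_lt_one_iff₀]; right; norm_num : (2 : ℝ≥0)⁻¹ < 1)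
    exact ⟨k, by rwa [inv_pow] at hk⟩
  set j : ℕ := ⌈(s : ℝ≥0) * 2 ^ k⌉₊ with hj
  have h2k : (0 : ℝ≥0) < 2 ^ k := by positivity
  have hle : s ≤ gp k j := by
    rw [gp, le_div_iff₀ h2k]
    exact Nat.le_ceil _
  have hlt : gp k j < d := by
    have h1 : (j : ℝ≥0) < s * 2 ^ k + 1 := Nat.ceil_lt_add_one (by positivity)
    have : gp k j < (s * 2 ^ k + 1) / 2 ^ k := by
      rw [gp]
      exact div_lt_div_of_pos_right h1 h2k
    calc gp k j < (s * 2 ^ k + 1) / 2 ^ k := this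
      _ = s + (2 ^ k : ℝ≥0)⁻¹ := by field_simp
      _ < s + (d - s) := by exact (add_lt_add_iff_left s).mpr hk
      _ = d := add_tsub_cancel_of_le hsd.le
  refine ⟨k, j, ?_, hle, hlt⟩
  rw [← gp_le_iff]
  exact le_trans hlt.le hdn

/-- on the hit event, the limiting value is at least `b`. -/
lemma b_le_iInf_gst_val (hrcω : ∀ t, ContinuousWithinAt (fun s => ξ s ω) (Set.Ici t) t)
    (hit : ∃ k₁ j₁, j₁ ≤ n * 2 ^ k₁ ∧ b < ξ (gp k₁ j₁) ω) :
    b ≤ ξ (⨅ k, gst ξ b n k ω) ω := by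
  obtain ⟨k₁, j₁, hj, hb⟩ := hit
  refine ge_of_tendsto (gst_val_tendsto (b := b) (n := n) hrcω) ?_
  filter_upwards [eventually_ge_atTop k₁] with k hk
  exact (lt_gst_value hk hj hb).le

/-- the skip-free cap: the limiting value is at most `c`. -/
lemma iInf_gst_val_le (hskipω : SkipFree T (fun t => ξ t ω))
    (hrcω : ∀ t, ContinuousWithinAt (fun s => ξ s ω) (Set.Ici t) t)
    (hvalω : ∀ t, ξ t ω ∈ T) (h0ω : ξ 0 ω = x)
    (hxT : x ∈ T) (hcT : c ∈ T) (hxb : x < b) (hbc : b < c) :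
    ξ (⨅ k, gst ξ b n k ω) ω ≤ c := by
  by_contra hcon
  push_neg at hcon
  set τ := ⨅ k, gst ξ b n k ω with hτdef
  have hτn : τ ≤ (n : ℝ≥0) := iInf_gst_le_horizon
  have hτ0 : τ ≠ 0 := by
    intro h
    rw [h, h0ω] at hcon
    exact absurd hcon (not_lt.2 (hxb.trans hbc).le)
  obtain ⟨s, _, hsτ, hs⟩ := hskipω x c (ξ τ ω) hxT hcT (hvalω τ) (hxb.trans hbc) hcon
    0 τ (pos_iff_ne_zero.mpr hτ0) (Or.inl ⟨h0ω, rfl⟩)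
  change ξ s ω = c at hs
  have hsτ' : s < τ := by
    rcases lt_or_eq_of_le hsτ with h | h
    · exact h
    · rw [h] at hs
      rw [hs] at hcon
      exact absurd hcon (lt_irrefl c)
  have hev : {u : ℝ≥0 | b < ξ u ω} ∈ 𝓝[Set.Ici s] s := by
    have hmem : Set.Ioi b ∈ 𝓝 (ξ s ω) := Ioi_mem_nhds (by rw [hs]; exact hbc)
    exact hrcω s hmem
  obtain ⟨u, hsu, hsub⟩ := mem_nhdsGE_iff_exists_Ico_subset.mp hev
  obtain ⟨k, j, hjle, hs_le, hlt'⟩ := exists_gp_mem (n := n) (s := s) (d := min u τ)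
    (lt_min hsu hsτ') (le_trans (min_le_right _ _) hτn)
  have hhit : b < ξ (gp k j) ω :=
    hsub ⟨hs_le, lt_of_lt_of_le hlt' (min_le_left _ _)⟩
  have h1 : gst ξ b n k ω ≤ gp k j := gp_mono (J_le (Or.inr ⟨hjle, hhit⟩))
  exact absurd (lt_of_le_of_lt (le_trans (iInf_gst_le k) h1)
    (lt_of_lt_of_le hlt' (min_le_right _ _))) (lt_irrefl τ)

end Path

section StoppedMeasurable

variable {m0 : MeasurableSpace Ω} {ℱ : Filtration ℝ≥0 m0} {τ : Ω → ℝ≥0}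

lemma measurableSet_stopped (hτ : IsStoppingTime ℱ (fun ω => (τ ω : WithTop ℝ≥0))) (S : Finset ℝ≥0) (hS : ∀ ω, τ ω ∈ S)
    {A : Set Ω} (hA : ∀ q ∈ S, MeasurableSet[ℱ q] (A ∩ {ω | τ ω = q})) :
    MeasurableSet[hτ.measurableSpace] A := by
  rw [hτ.measurableSet]
  have key : ∀ i : ℝ≥0, MeasurableSet[ℱ i] (A ∩ {ω | τ ω ≤ i}) := by
    intro i
    have hset : A ∩ {ω | τ ω ≤ i} = ⋃ q ∈ S.filter (· ≤ i), A ∩ {ω | τ ω = q} := by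
      ext ω
      simp only [Set.mem_inter_iff, Set.mem_setOf_eq, Set.mem_iUnion, Finset.mem_filter]
      constructor
      · rintro ⟨hA', hle⟩
        exact ⟨τ ω, ⟨⟨hS ω, hle⟩, hA', rfl⟩⟩
      · rintro ⟨q, ⟨_, hqi⟩, hA', rfl⟩
        exact ⟨hA', hqi⟩
    rw [hset]
    refine (S.filter (· ≤ i)).measurableSet_biUnion fun q hq => ?_
    exact ℱ.mono (Finset.mem_filter.mp hq).2 _ (hA q (Finset.mem_filter.mp hq).1)
  refine ⟨?_, fun i => by simpa only [WithTop.coe_le_coe] using key i⟩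
  have hA' : A = A ∩ {ω | τ ω ≤ S.sup id} := by
    ext ω
    simp only [Set.mem_inter_iff, Set.mem_setOf_eq, iff_self_and]
    exact fun _ => Finset.le_sup (f := id) (hS ω)
  rw [hA']
  exact (le_iSup (fun t => (ℱ t : MeasurableSpace Ω)) (S.sup id)) _ (key _)

end StoppedMeasurable

end NoLB

open NoLB

/-- there is no Brownian motion on a closed set `T ⊆ ℝ` that is unbounded
above but bounded below: if `inf T = a > -∞`, there is no càdlàg `T`-valued process `ξ`
with `ξ_0 = x ∈ T` satisfying (I') (skip-free paths), (II) (`ξ` is a martingale) and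
(III) (`ξ_t² - t` is a martingale). (In the paper's argument, for `b ∈ T` with `x < b`
and `T_b = inf{t : ξ_t ∉ [a,b]}` one has `E[t ∧ T_b] ≤ a² ∨ b² - x²`, `T_b < ∞` a.s.,
`ξ_{T_b} = b` a.s., and the bounded martingale `ξ_{·∧T_b}` yields the contradiction
`b = x`.) -/
theorem no_lower_bounded_state_space {Ω : Type*} {m0 : MeasurableSpace Ω} (μ : Measure Ω)
    [IsProbabilityMeasure μ] (T : Set ℝ) (hclosed : IsClosed T)
    (hub : ∀ M : ℝ, ∃ y ∈ T, M < y) (a : ℝ) (ha : IsGLB T a)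
    (ℱ : Filtration ℝ≥0 m0) (ξ : ℝ≥0 → Ω → ℝ)
    (hval : ∀ t ω, ξ t ω ∈ T)
    (hrc : ∀ ω, ∀ t : ℝ≥0, ContinuousWithinAt (fun s => ξ s ω) (Set.Ici t) t)
    (x : ℝ) (hx : x ∈ T) (h0 : ∀ ω, ξ 0 ω = x)
    (hskip : ∀ᵐ ω ∂μ, SkipFree T (fun t => ξ t ω))
    (hmartII : Martingale ξ ℱ μ)
    (hmartIII : Martingale (fun (t : ℝ≥0) ω => (ξ t ω) ^ 2 - (t : ℝ)) ℱ μ) :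
    False := by
  classical
  obtain ⟨b, hbT, hxb⟩ := hub x
  obtain ⟨c, hcT, hbc⟩ := hub b
  have hax : a ≤ x := ha.1 hx
  have haval : ∀ t ω, a ≤ ξ t ω := fun t ω => ha.1 (hval t ω)
  have hac : a ≤ c := ha.1 hcT
  set Cm : ℝ := max |a| |c| with hCm
  have hCm0 : 0 ≤ Cm := le_trans (abs_nonneg a) (le_max_left _ _)
  set K : ℝ := Cm ^ 2 + 2 - x ^ 2 with hK
  set q0 : ℝ := (b - x) / (b - a) with hq0
  have hba : 0 < b - a := by linarith
  have hq0pos : 0 < q0 := div_pos (by linarith) hba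
  obtain ⟨n, hn⟩ := exists_nat_gt (max 0 (K / q0))
  have hnK : K / q0 < (n : ℝ) := lt_of_le_of_lt (le_max_right _ _) hn
  -- the grid stopping times and their limit
  set σ : ℕ → Ω → ℝ≥0 := fun k => gst ξ b n k with hσdef
  set τ : Ω → ℝ≥0 := fun ω => ⨅ k, σ k ω with hτdef
  have hadp : Adapted ℱ ξ := hmartII.stronglyAdapted.adapted
  have hstop : ∀ k, IsStoppingTime ℱ (fun ω => (σ k ω : WithTop ℝ≥0)) := fun k => gst_isStoppingTime hadp
  have hσle : ∀ k ω, σ k ω ≤ (n : ℝ≥0) := fun k ω => gst_le_horizon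
  have hσle' : ∀ k ω, (σ k ω : WithTop ℝ≥0) ≤ ((n : ℝ≥0) : WithTop ℝ≥0) := fun k ω =>
    WithTop.coe_le_coe.mpr (hσle k ω)
  -- integrability
  have hInt1 : ∀ t : ℝ≥0, Integrable (ξ t) μ := hmartII.integrable
  have hInt3 : ∀ t : ℝ≥0, Integrable (fun ω => ξ t ω ^ 2 - (t : ℝ)) μ := hmartIII.integrable
  have hInt2 : ∀ t : ℝ≥0, Integrable (fun ω => ξ t ω ^ 2) μ := by
    intro t
    have h := (hInt3 t).add (integrable_const (t : ℝ))
    refine h.congr (Filter.Eventually.of_forall fun ω => ?_)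
    simp
  -- expectations of the martingales
  have hE1 : ∀ t : ℝ≥0, ∫ ω, ξ t ω ∂μ = x := by
    intro t
    have h := hmartII.condExp_ae_eq (zero_le (a := t))
    calc ∫ ω, ξ t ω ∂μ = ∫ ω, (μ[ξ t|ℱ 0]) ω ∂μ := (integral_condExp (ℱ.le 0)).symm
      _ = ∫ ω, ξ 0 ω ∂μ := integral_congr_ae h
      _ = ∫ _ω, x ∂μ := by simp [h0]
      _ = x := by simp
  have hE2 : ∀ t : ℝ≥0, ∫ ω, (ξ t ω ^ 2 - (t : ℝ)) ∂μ = x ^ 2 := by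
    intro t
    have h := hmartIII.condExp_ae_eq (zero_le (a := t))
    calc ∫ ω, (ξ t ω ^ 2 - (t : ℝ)) ∂μ
        = ∫ ω, (μ[fun ω => ξ t ω ^ 2 - (t : ℝ)|ℱ 0]) ω ∂μ := (integral_condExp (ℱ.le 0)).symm
      _ = ∫ ω, (ξ 0 ω ^ 2 - ((0 : ℝ≥0) : ℝ)) ∂μ := integral_congr_ae h
      _ = ∫ _ω, x ^ 2 ∂μ := by simp [h0]
      _ = x ^ 2 := by simp
  -- grid membership and stopped-value integrability
  set S : ℕ → Finset ℝ≥0 := fun k => (Finset.range (n * 2 ^ k + 1)).image (gp k) with hSdef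
  have hmemS : ∀ k ω, σ k ω ∈ S k := by
    intro k ω
    obtain ⟨j, hj, hval'⟩ := gst_mem_grid (ξ := ξ) (b := b) (n := n) (k := k) (ω := ω)
    exact Finset.mem_image.mpr ⟨j, Finset.mem_range.mpr (by omega), hval'.symm⟩
  have hmemS' : ∀ k ω, (σ k ω : WithTop ℝ≥0) ∈ WithTop.some '' (S k : Set ℝ≥0) :=
    fun k ω => ⟨_, hmemS k ω, rfl⟩
  have hIsv1 : ∀ k, Integrable (fun ω => ξ (σ k ω) ω) μ := fun k =>
    integrable_stoppedValue_of_mem_finset (hstop k) hInt1 (hmemS' k)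
  have hIsv2 : ∀ k, Integrable (fun ω => ξ (σ k ω) ω ^ 2) μ := fun k =>
    integrable_stoppedValue_of_mem_finset (u := fun t ω => ξ t ω ^ 2) (hstop k) hInt2 (hmemS' k)
  have hIsv3 : ∀ k, Integrable (fun ω => ξ (σ k ω) ω ^ 2 - ((σ k ω : ℝ≥0) : ℝ)) μ := fun k =>
    integrable_stoppedValue_of_mem_finset (u := fun t ω => ξ t ω ^ 2 - (t : ℝ)) (hstop k)
      hInt3 (hmemS' k)
  have hIσ : ∀ k, Integrable (fun ω => ((σ k ω : ℝ≥0) : ℝ)) μ := fun k =>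
    integrable_stoppedValue_of_mem_finset (u := fun t (_ : Ω) => ((t : ℝ≥0) : ℝ)) (hstop k)
      (fun _ => integrable_const _) (hmemS' k)
  -- optional sampling: expectations at the stopping times
  have hOS1 : ∀ k, ∫ ω, ξ (σ k ω) ω ∂μ = x := by
    intro k
    have h := hmartII.stoppedValue_ae_eq_condExp_of_le_const_of_countable_range (hstop k)
      (hσle' k) gst_countable_range
    calc ∫ ω, ξ (σ k ω) ω ∂μ
        = ∫ ω, (μ[ξ (n : ℝ≥0)|(hstop k).measurableSpace]) ω ∂μ := integral_congr_ae h
      _ = ∫ ω, ξ (n : ℝ≥0) ω ∂μ := integral_condExp ((hstop k).measurableSpace_le_of_le (hσle' k))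
      _ = x := hE1 _
  have hOS2 : ∀ k, ∫ ω, (ξ (σ k ω) ω ^ 2 - ((σ k ω : ℝ≥0) : ℝ)) ∂μ = x ^ 2 := by
    intro k
    have h := hmartIII.stoppedValue_ae_eq_condExp_of_le_const_of_countable_range (hstop k)
      (hσle' k) gst_countable_range
    calc ∫ ω, (ξ (σ k ω) ω ^ 2 - ((σ k ω : ℝ≥0) : ℝ)) ∂μ
        = ∫ ω, (μ[fun ω => ξ (n : ℝ≥0) ω ^ 2 - ((n : ℝ≥0) : ℝ)|(hstop k).measurableSpace]) ω ∂μ :=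
          integral_congr_ae h
      _ = ∫ ω, (ξ (n : ℝ≥0) ω ^ 2 - ((n : ℝ≥0) : ℝ)) ∂μ :=
          integral_condExp ((hstop k).measurableSpace_le_of_le (hσle' k))
      _ = x ^ 2 := hE2 _
  -- measurability of the stopped values
  have hmeas_ξ : ∀ t : ℝ≥0, Measurable (ξ t) := fun t =>
    (hadp t).mono (ℱ.le t) le_rfl
  have hmeas_sv : ∀ k, Measurable fun ω => ξ (σ k ω) ω := by
    intro k
    have heq := stoppedValue_eq_of_mem_finset (u := ξ) (τ := fun ω => (σ k ω : WithTop ℝ≥0)) (hmemS' k)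
    have heq' : (fun ω => ξ (σ k ω) ω)
        = fun a => ∑ i ∈ S k, Set.indicator {ω | σ k ω = i} (ξ i) a := by
      rw [show (fun ω => ξ (σ k ω) ω) = stoppedValue ξ (fun ω => (σ k ω : WithTop ℝ≥0)) from rfl, heq]
      funext a
      simp only [Finset.sum_apply, WithTop.coe_eq_coe]
    rw [heq']
    refine Finset.measurable_sum _ fun i _ => Measurable.indicator (hmeas_ξ i) ?_
    exact (ℱ.le i) _ (by simpa only [WithTop.coe_eq_coe] using
        (hstop k).measurableSet_eq_of_countable_range gst_countable_range i)
  -- the hit event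
  set H : Set Ω := {ω | ∃ k j, j ≤ n * 2 ^ k ∧ b < ξ (gp k j) ω} with hHdef
  have hHmeas : MeasurableSet H := by
    have hrw : H = ⋃ (k : ℕ) (j : ℕ) (_ : j ≤ n * 2 ^ k), {ω | b < ξ (gp k j) ω} := by
      ext ω
      simp only [hHdef, Set.mem_setOf_eq, Set.mem_iUnion, exists_prop]
    rw [hrw]
    exact MeasurableSet.iUnion fun k => MeasurableSet.iUnion fun j =>
      MeasurableSet.iUnion fun _ => measurableSet_lt measurable_const (hmeas_ξ _)
  set p : ℝ := (μ Hᶜ).toReal with hpdef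
  have hpH : (μ H).toReal = 1 - p := by
    have hsum : (μ H).toReal + (μ Hᶜ).toReal = 1 := by
      rw [← ENNReal.toReal_add (measure_ne_top μ H) (measure_ne_top μ Hᶜ),
        measure_add_measure_compl hHmeas, measure_univ, ENNReal.toReal_one]
    rw [hpdef]; linarith
  -- pathwise facts
  have hvt : ∀ ω, Tendsto (fun k => ξ (σ k ω) ω) atTop (𝓝 (ξ (τ ω) ω)) := fun ω =>
    gst_val_tendsto (hrc ω)
  have hcap : ∀ᵐ ω ∂μ, ξ (τ ω) ω ≤ c := hskip.mono fun ω hω =>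
    iInf_gst_val_le hω (hrc ω) (fun t => hval t ω) (h0 ω) hx hcT hxb hbc
  have hbH : ∀ ω ∈ H, b ≤ ξ (τ ω) ω := fun ω hω => b_le_iInf_gst_val (hrc ω) hω
  have hσHc : ∀ ω ∉ H, ∀ k, σ k ω = (n : ℝ≥0) := fun ω hω k =>
    gst_eq_horizon fun j hj hb => hω ⟨k, j, hj, hb⟩
  -- bound utility
  have habsCm : ∀ y : ℝ, a ≤ y → y ≤ c → |y| ≤ Cm := fun y h1 h2 => abs_le.mpr
    ⟨by have h3 := neg_abs_le a; have h4 := le_max_left |a| |c|; linarith,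
     by have h3 := le_abs_self c; have h4 := le_max_right |a| |c|; linarith⟩
  -- (B): ∫ min (ξ τ) c ≤ x  and the lower bound via H
  have hZm : ∀ k, AEStronglyMeasurable (fun ω => min (ξ (σ k ω) ω) c) μ := fun k =>
    ((hmeas_sv k).min measurable_const).aestronglyMeasurable
  have hZlim : ∀ ω, Tendsto (fun k => min (ξ (σ k ω) ω) c) atTop (𝓝 (min (ξ (τ ω) ω) c)) :=
    fun ω => (hvt ω).min tendsto_const_nhds
  have hZmeas : AEStronglyMeasurable (fun ω => min (ξ (τ ω) ω) c) μ :=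
    aestronglyMeasurable_of_tendsto_ae atTop hZm (Filter.Eventually.of_forall hZlim)
  have hZbnd : ∀ k, ∀ ω : Ω, ‖min (ξ (σ k ω) ω) c‖ ≤ Cm := fun k ω => by
    rw [Real.norm_eq_abs]
    exact habsCm _ (le_min (haval _ _) hac) (min_le_right _ _)
  have hZint : Integrable (fun ω => min (ξ (τ ω) ω) c) μ := by
    refine Integrable.mono' (integrable_const Cm) hZmeas (Filter.Eventually.of_forall fun ω => ?_)
    rw [Real.norm_eq_abs]
    exact habsCm _ (le_min (haval _ _) hac) (min_le_right _ _)
  have hIZ : ∫ ω, min (ξ (τ ω) ω) c ∂μ ≤ x := by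
    have hDCT := tendsto_integral_of_dominated_convergence (μ := μ)
      (F := fun k ω => min (ξ (σ k ω) ω) c) (f := fun ω => min (ξ (τ ω) ω) c)
      (fun _ => Cm) hZm (integrable_const Cm)
      (fun k => Filter.Eventually.of_forall (hZbnd k)) (Filter.Eventually.of_forall hZlim)
    refine le_of_tendsto hDCT (Filter.Eventually.of_forall fun k => ?_)
    have hmono : ∫ ω, min (ξ (σ k ω) ω) c ∂μ ≤ ∫ ω, ξ (σ k ω) ω ∂μ := by
      refine integral_mono ?_ (hIsv1 k) fun ω => min_le_left _ _
      exact Integrable.mono' (integrable_const Cm) (hZm k)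
        (Filter.Eventually.of_forall (hZbnd k))
    calc ∫ ω, min (ξ (σ k ω) ω) c ∂μ ≤ ∫ ω, ξ (σ k ω) ω ∂μ := hmono
      _ = x := hOS1 k
  have hlow : b * (1 - p) + a * p ≤ ∫ ω, min (ξ (τ ω) ω) c ∂μ := by
    have e1 : ∫ _ω in H, b ∂μ = (1 - p) * b := by
      rw [setIntegral_const, measureReal_def, hpH, smul_eq_mul]
    have e2 : ∫ _ω in Hᶜ, a ∂μ = p * a := by
      rw [setIntegral_const, measureReal_def, smul_eq_mul, hpdef]
    have i1 : ∫ _ω in H, b ∂μ ≤ ∫ ω in H, min (ξ (τ ω) ω) c ∂μ := by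
      refine setIntegral_mono_on (integrable_const b).integrableOn hZint.integrableOn hHmeas
        fun ω hω => le_min (hbH ω hω) hbc.le
    have i2 : ∫ _ω in Hᶜ, a ∂μ ≤ ∫ ω in Hᶜ, min (ξ (τ ω) ω) c ∂μ := by
      refine setIntegral_mono_on (integrable_const a).integrableOn hZint.integrableOn
        hHmeas.compl fun ω _ => le_min (haval _ _) hac
    have hsplit : ∫ ω in H, min (ξ (τ ω) ω) c ∂μ + ∫ ω in Hᶜ, min (ξ (τ ω) ω) c ∂μ
        = ∫ ω, min (ξ (τ ω) ω) c ∂μ := integral_add_compl hHmeas hZint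
    calc b * (1 - p) + a * p = (1 - p) * b + p * a := by ring
      _ ≤ _ := by rw [← e1, ← e2, ← hsplit]; exact add_le_add i1 i2
  have hpq : q0 ≤ p := by
    have hcomb : b * (1 - p) + a * p ≤ x := le_trans hlow hIZ
    rw [hq0, div_le_iff₀ hba]
    linarith
  -- (A): the escape estimate via the second martingale
  set Ak : ℕ → Set Ω := fun k => {ω | Cm ^ 2 + 1 ≤ ξ (σ k ω) ω ^ 2} with hAkdef
  have hAk_m0 : ∀ k, MeasurableSet (Ak k) := fun k =>
    measurableSet_le measurable_const ((hmeas_sv k).pow_const 2)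
  have hAk_mσ : ∀ k, MeasurableSet[(hstop k).measurableSpace] (Ak k) := by
    intro k
    refine measurableSet_stopped (hstop k) (S k) (hmemS k) fun q hq => ?_
    have h1 : Ak k ∩ {ω | σ k ω = q} = {ω | Cm ^ 2 + 1 ≤ ξ q ω ^ 2} ∩ {ω | σ k ω = q} := by
      ext ω
      simp only [hAkdef, Set.mem_inter_iff, Set.mem_setOf_eq]
      constructor
      · rintro ⟨h2, h3⟩; rw [h3] at h2; exact ⟨h2, h3⟩
      · rintro ⟨h2, h3⟩; rw [← h3] at h2; exact ⟨h2, h3⟩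
    rw [h1]
    exact (measurableSet_le measurable_const ((hadp q).pow_const 2)).inter
      (by simpa only [WithTop.coe_eq_coe] using
        (hstop k).measurableSet_eq_of_countable_range gst_countable_range q)
  have hesc : ∀ᵐ ω ∂μ, ∀ᶠ k in atTop, ω ∉ Ak k := by
    refine hcap.mono fun ω hcω => ?_
    have hsq : ξ (τ ω) ω ^ 2 ≤ Cm ^ 2 := by
      have h1 := habsCm _ (haval (τ ω) ω) hcω
      calc ξ (τ ω) ω ^ 2 = |ξ (τ ω) ω| ^ 2 := (sq_abs _).symm
        _ ≤ Cm ^ 2 := pow_le_pow_left₀ (abs_nonneg _) h1 2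
    have hlim : Tendsto (fun k => ξ (σ k ω) ω ^ 2) atTop (𝓝 (ξ (τ ω) ω ^ 2)) := (hvt ω).pow 2
    have hev : ∀ᶠ k in atTop, ξ (σ k ω) ω ^ 2 < Cm ^ 2 + 1 :=
      hlim.eventually_lt_const (by linarith)
    exact hev.mono fun k hk => by
      simp only [hAkdef, Set.mem_setOf_eq]
      exact not_le.mpr hk
  have hDCT0 : Tendsto (fun k => ∫ ω in Ak k, ξ (n : ℝ≥0) ω ^ 2 ∂μ) atTop (𝓝 0) := by
    have hbd : ∀ k, ∀ ω : Ω, ‖(Ak k).indicator (fun ω => ξ (n : ℝ≥0) ω ^ 2) ω‖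
        ≤ ξ (n : ℝ≥0) ω ^ 2 := by
      intro k ω
      rw [Real.norm_eq_abs]
      by_cases hω : ω ∈ Ak k
      · rw [Set.indicator_of_mem hω, abs_of_nonneg (sq_nonneg _)]
      · rw [Set.indicator_of_notMem hω, abs_zero]
        exact sq_nonneg _
    have h := tendsto_integral_of_dominated_convergence (μ := μ)
      (F := fun k => (Ak k).indicator fun ω => ξ (n : ℝ≥0) ω ^ 2) (f := fun _ => (0 : ℝ))
      (fun ω => ξ (n : ℝ≥0) ω ^ 2)
      (fun k => (((hmeas_ξ _).pow_const 2).indicator (hAk_m0 k)).aestronglyMeasurable)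
      (hInt2 _) (fun k => Filter.Eventually.of_forall (hbd k))
      (hesc.mono fun ω hω => Tendsto.congr'
        (hω.mono fun k hk => (Set.indicator_of_notMem hk _).symm) tendsto_const_nhds)
    rw [integral_zero] at h
    refine h.congr fun k => ?_
    exact (integral_indicator (hAk_m0 k))
  obtain ⟨k₀, hk₀⟩ : ∃ k, ∫ ω in Ak k, ξ (n : ℝ≥0) ω ^ 2 ∂μ < 1 :=
    (hDCT0.eventually_lt_const (by norm_num : (0 : ℝ) < 1)).exists
  -- the chain at level k₀
  have hmle := (hstop k₀).measurableSpace_le_of_le (hσle' k₀)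
  have hsv3 := hmartIII.stoppedValue_ae_eq_condExp_of_le_const_of_countable_range (hstop k₀)
    (hσle' k₀) gst_countable_range
  have hsetc : ∫ ω in Ak k₀, (ξ (σ k₀ ω) ω ^ 2 - ((σ k₀ ω : ℝ≥0) : ℝ)) ∂μ
      = ∫ ω in Ak k₀, (ξ (n : ℝ≥0) ω ^ 2 - ((n : ℝ≥0) : ℝ)) ∂μ := by
    calc ∫ ω in Ak k₀, (ξ (σ k₀ ω) ω ^ 2 - ((σ k₀ ω : ℝ≥0) : ℝ)) ∂μ
        = ∫ ω in Ak k₀,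
            (μ[fun ω => ξ (n : ℝ≥0) ω ^ 2 - ((n : ℝ≥0) : ℝ)|(hstop k₀).measurableSpace]) ω ∂μ :=
          setIntegral_congr_ae (hAk_m0 k₀) (hsv3.mono fun ω h _ => h)
      _ = _ := setIntegral_condExp hmle (hInt3 _) (hAk_mσ k₀)
  have hsub1 : ∫ ω in Ak k₀, (ξ (σ k₀ ω) ω ^ 2 - ((σ k₀ ω : ℝ≥0) : ℝ)) ∂μ
      = ∫ ω in Ak k₀, ξ (σ k₀ ω) ω ^ 2 ∂μ - ∫ ω in Ak k₀, ((σ k₀ ω : ℝ≥0) : ℝ) ∂μ :=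
    integral_sub ((hIsv2 k₀).integrableOn) ((hIσ k₀).integrableOn)
  have hsub2 : ∫ ω in Ak k₀, (ξ (n : ℝ≥0) ω ^ 2 - ((n : ℝ≥0) : ℝ)) ∂μ
      = ∫ ω in Ak k₀, ξ (n : ℝ≥0) ω ^ 2 ∂μ - ∫ ω in Ak k₀, ((n : ℝ≥0) : ℝ) ∂μ :=
    integral_sub ((hInt2 _).integrableOn) (integrable_const _).integrableOn
  have hσA : ∫ ω in Ak k₀, ((σ k₀ ω : ℝ≥0) : ℝ) ∂μ ≤ ∫ ω in Ak k₀, ((n : ℝ≥0) : ℝ) ∂μ :=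
    setIntegral_mono_on (hIσ k₀).integrableOn (integrable_const _).integrableOn (hAk_m0 k₀)
      fun ω _ => by exact_mod_cast hσle k₀ ω
  have hA1 : ∫ ω in Ak k₀, ξ (σ k₀ ω) ω ^ 2 ∂μ ≤ ∫ ω in Ak k₀, ξ (n : ℝ≥0) ω ^ 2 ∂μ := by
    linarith [hsetc, hsub1, hsub2, hσA]
  have hprob1 : ((μ (Ak k₀)ᶜ).toReal) ≤ 1 := by
    have h1 : μ (Ak k₀)ᶜ ≤ 1 := prob_le_one
    simpa using ENNReal.toReal_mono ENNReal.one_ne_top h1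
  have hAc : ∫ ω in (Ak k₀)ᶜ, ξ (σ k₀ ω) ω ^ 2 ∂μ ≤ Cm ^ 2 + 1 := by
    have h1 : ∫ ω in (Ak k₀)ᶜ, ξ (σ k₀ ω) ω ^ 2 ∂μ ≤ ∫ _ω in (Ak k₀)ᶜ, (Cm ^ 2 + 1) ∂μ := by
      refine setIntegral_mono_on (hIsv2 k₀).integrableOn (integrable_const _).integrableOn
        (hAk_m0 k₀).compl fun ω hω => ?_
      have : ω ∉ Ak k₀ := hω
      simp only [hAkdef, Set.mem_setOf_eq, not_le] at this
      exact this.le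
    have h2 : ∫ _ω in (Ak k₀)ᶜ, (Cm ^ 2 + 1) ∂μ = (μ (Ak k₀)ᶜ).toReal * (Cm ^ 2 + 1) := by
      rw [setIntegral_const, measureReal_def, smul_eq_mul]
    have h3 : (μ (Ak k₀)ᶜ).toReal * (Cm ^ 2 + 1) ≤ Cm ^ 2 + 1 := by
      nlinarith [ENNReal.toReal_nonneg (a := μ (Ak k₀)ᶜ)]
    linarith
  have htot : ∫ ω, ξ (σ k₀ ω) ω ^ 2 ∂μ ≤ Cm ^ 2 + 2 := by
    have h1 := integral_add_compl (hAk_m0 k₀) (hIsv2 k₀)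
    linarith [hA1, hk₀, hAc]
  have hEσ : ∫ ω, ((σ k₀ ω : ℝ≥0) : ℝ) ∂μ = ∫ ω, ξ (σ k₀ ω) ω ^ 2 ∂μ - x ^ 2 := by
    have h1 := integral_sub (hIsv2 k₀) (hIσ k₀)
    have h2 := hOS2 k₀
    rw [h1] at h2
    linarith
  have hnp : (n : ℝ) * p ≤ ∫ ω, ((σ k₀ ω : ℝ≥0) : ℝ) ∂μ := by
    have h1 : ∫ ω in Hᶜ, ((σ k₀ ω : ℝ≥0) : ℝ) ∂μ = (n : ℝ) * p := by
      have h2 : ∫ ω in Hᶜ, ((σ k₀ ω : ℝ≥0) : ℝ) ∂μ = ∫ _ω in Hᶜ, ((n : ℝ)) ∂μ := by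
        refine setIntegral_congr_fun hHmeas.compl fun ω hω => ?_
        rw [hσHc ω hω k₀]
        push_cast
        rfl
      rw [h2, setIntegral_const, measureReal_def, smul_eq_mul, hpdef]
      ring
    calc (n : ℝ) * p = ∫ ω in Hᶜ, ((σ k₀ ω : ℝ≥0) : ℝ) ∂μ := h1.symm
      _ ≤ ∫ ω, ((σ k₀ ω : ℝ≥0) : ℝ) ∂μ :=
        setIntegral_le_integral (hIσ k₀)
          (Filter.Eventually.of_forall fun ω => NNReal.coe_nonneg _)
  -- the final contradiction
  have hfinal : (n : ℝ) * p ≤ K := by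
    rw [hK]
    linarith [hnp, hEσ, htot]
  have hmul : (n : ℝ) * q0 ≤ (n : ℝ) * p := mul_le_mul_of_nonneg_left hpq (Nat.cast_nonneg n)
  have hKlt : K < (n : ℝ) * q0 := by
    rw [div_lt_iff₀ hq0pos] at hnK
    linarith
  linarith
end

section
/- Fix q > 1 and c_q = q^{−1}(q−1)²(1+q). Define m_k(t,x) for k ≥ 0 by the recursion m_0(t,x)=1, m_1(t,x)=x, and m_k(t,x) = x^k + (q^{1−k}/c_q)(1−q^k)(1−q^{k−1}) ∫_0^t m_{k−2}(s,x) ds. Then m_k(t,x) = Σ_{m=0, m≡k mod 2}^{k} c_q^{−(k−m)/2} ((q;q)_k/(q;q)_m) q^{(m²−k²)/4} t^{(k−m)/2} x^m / ((k−m)/2)!, where (q;q)_n = ∏_{j=1}^n (1 − q^j). -/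
noncomputable def momRHS (q : ℝ) (k : ℕ) (t x : ℝ) : ℝ :=
  ∑ j ∈ Finset.range (k + 1),
    if (k - j) % 2 = 0 then
      (q⁻¹ * (q - 1) ^ 2 * (1 + q)) ^ (-(((k : ℤ) - j) / 2)) *
        ((∏ i ∈ Finset.range k, (1 - q ^ (i + 1))) /
          (∏ i ∈ Finset.range j, (1 - q ^ (i + 1)))) *
        q ^ (((j : ℤ) ^ 2 - (k : ℤ) ^ 2) / 4) *
        t ^ ((k - j) / 2) / (Nat.factorial ((k - j) / 2)) * x ^ j
    else 0

lemma qprod_ne_zero (q : ℝ) (hq : 1 < q) (n : ℕ) :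
    (∏ i ∈ Finset.range n, (1 - q ^ (i + 1))) ≠ 0 := by
  refine Finset.prod_ne_zero_iff.mpr fun i _ => ?_
  have h1 : 1 < q ^ (i + 1) := one_lt_pow₀ hq (Nat.succ_ne_zero i)
  intro h; linarith

lemma integral_aux (A F X : ℝ) (e : ℕ) (t : ℝ) :
    (∫ s in (0:ℝ)..t, A * s ^ e / F * X) = A * (t ^ (e + 1) / (e + 1)) / F * X := by
  have h : (fun s : ℝ => A * s ^ e / F * X) = fun s => (A / F * X) * s ^ e :=
    funext fun s => by ring
  rw [h, intervalIntegral.integral_const_mul, integral_pow]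
  simp [zero_pow]
  ring

lemma step_lemma (q : ℝ) (hq : 1 < q) (n : ℕ) (t x : ℝ) :
    x ^ (n + 2) +
      (q ^ (-(n : ℤ) - 1) / (q⁻¹ * (q - 1) ^ 2 * (1 + q))) * (1 - q ^ (n + 2)) *
        (1 - q ^ (n + 1)) * ∫ s in (0 : ℝ)..t, momRHS q n s x
    = momRHS q (n + 2) t x := by
  have hq0 : (0:ℝ) < q := lt_trans one_pos hq
  have hcpos : 0 < q⁻¹ * (q - 1) ^ 2 * (1 + q) :=
    mul_pos (mul_pos (inv_pos.2 hq0) (pow_pos (by linarith) 2)) (by linarith)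
  have hc : q⁻¹ * (q - 1) ^ 2 * (1 + q) ≠ 0 := ne_of_gt hcpos
  simp only [momRHS]
  rw [Finset.sum_range_succ, Finset.sum_range_succ]
  rw [intervalIntegral.integral_finset_sum ?hint]
  case hint =>
    intro j _
    by_cases h : (n - j) % 2 = 0
    · simp only [if_pos h]
      apply Continuous.intervalIntegrable
      fun_prop
    · simp only [if_neg h]
      exact intervalIntegrable_const
  have hg1 : (if (n + 2 - (n + 1)) % 2 = 0 then
      (q⁻¹ * (q - 1) ^ 2 * (1 + q)) ^ (-((((n+2 : ℕ) : ℤ) - ((n+1 : ℕ) : ℤ)) / 2)) *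
        ((∏ i ∈ Finset.range (n+2), (1 - q ^ (i + 1))) /
          (∏ i ∈ Finset.range (n+1), (1 - q ^ (i + 1)))) *
        q ^ ((((n+1 : ℕ) : ℤ) ^ 2 - ((n+2 : ℕ) : ℤ) ^ 2) / 4) *
        t ^ ((n + 2 - (n+1)) / 2) / (Nat.factorial ((n + 2 - (n+1)) / 2)) * x ^ (n+1)
    else 0) = 0 := by
    rw [if_neg (by omega)]
  rw [hg1]
  have hg2 : (if (n + 2 - (n + 2)) % 2 = 0 then
      (q⁻¹ * (q - 1) ^ 2 * (1 + q)) ^ (-((((n+2 : ℕ) : ℤ) - ((n+2 : ℕ) : ℤ)) / 2)) *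
        ((∏ i ∈ Finset.range (n+2), (1 - q ^ (i + 1))) /
          (∏ i ∈ Finset.range (n+2), (1 - q ^ (i + 1)))) *
        q ^ ((((n+2 : ℕ) : ℤ) ^ 2 - ((n+2 : ℕ) : ℤ) ^ 2) / 4) *
        t ^ ((n + 2 - (n+2)) / 2) / (Nat.factorial ((n + 2 - (n+2)) / 2)) * x ^ (n+2)
    else 0) = x ^ (n + 2) := by
    rw [if_pos (by omega)]
    rw [sub_self, div_self (qprod_ne_zero q hq (n+2)), Nat.sub_self]
    norm_num
  rw [hg2]
  have key : (q ^ (-(n : ℤ) - 1) / (q⁻¹ * (q - 1) ^ 2 * (1 + q))) * (1 - q ^ (n + 2)) *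
        (1 - q ^ (n + 1)) *
      ∑ j ∈ Finset.range (n + 1), (∫ s in (0:ℝ)..t, if (n - j) % 2 = 0 then
        (q⁻¹ * (q - 1) ^ 2 * (1 + q)) ^ (-(((n : ℤ) - j) / 2)) *
          ((∏ i ∈ Finset.range n, (1 - q ^ (i + 1))) /
            (∏ i ∈ Finset.range j, (1 - q ^ (i + 1)))) *
          q ^ (((j : ℤ) ^ 2 - (n : ℤ) ^ 2) / 4) *
          s ^ ((n - j) / 2) / (Nat.factorial ((n - j) / 2)) * x ^ j
        else 0)
    = ∑ j ∈ Finset.range (n + 1), (if (n + 2 - j) % 2 = 0 then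
        (q⁻¹ * (q - 1) ^ 2 * (1 + q)) ^ (-((((n+2 : ℕ) : ℤ) - j) / 2)) *
          ((∏ i ∈ Finset.range (n+2), (1 - q ^ (i + 1))) /
            (∏ i ∈ Finset.range j, (1 - q ^ (i + 1)))) *
          q ^ (((j : ℤ) ^ 2 - ((n+2 : ℕ) : ℤ) ^ 2) / 4) *
          t ^ ((n + 2 - j) / 2) / (Nat.factorial ((n + 2 - j) / 2)) * x ^ j
      else 0) := by
    rw [Finset.mul_sum]
    refine Finset.sum_congr rfl fun j hj => ?_
    have hjn : j ≤ n := Nat.lt_succ_iff.mp (Finset.mem_range.mp hj)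
    by_cases hpar : (n - j) % 2 = 0
    · have hpar2 : (n + 2 - j) % 2 = 0 := by omega
      obtain ⟨e, he⟩ : ∃ e, n - j = 2 * e := ⟨(n - j) / 2, by omega⟩
      simp only [if_pos hpar, if_pos hpar2]
      have hE1 : (n - j) / 2 = e := by omega
      have hE2 : (n + 2 - j) / 2 = e + 1 := by omega
      simp only [hE1, hE2]
      rw [integral_aux]
      have hz0 : ((n : ℤ) - j) / 2 = e := by omega
      have hz1 : (((n + 2 : ℕ) : ℤ) - j) / 2 = e + 1 := by push_cast; omega
      have hz2 : ((j : ℤ) ^ 2 - ((n + 2 : ℕ) : ℤ) ^ 2) / 4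
          = ((j : ℤ) ^ 2 - (n : ℤ) ^ 2) / 4 + (-((n : ℤ) + 1)) := by
        have h4 : ((j : ℤ) ^ 2 - ((n + 2 : ℕ) : ℤ) ^ 2)
            = ((j : ℤ) ^ 2 - (n : ℤ) ^ 2) + (-((n : ℤ) + 1)) * 4 := by push_cast; ring
        rw [h4, Int.add_mul_ediv_right _ _ (by norm_num : (4:ℤ) ≠ 0)]
      rw [hz0, hz1, hz2]
      rw [Finset.prod_range_succ, Finset.prod_range_succ]
      rw [zpow_add₀ (ne_of_gt hq0), show (-((e : ℤ) + 1)) = (-(e : ℤ)) + (-1) by ring,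
        zpow_add₀ hc, zpow_neg_one]
      rw [show (-((n : ℤ) + 1)) = -(((n + 1 : ℕ) : ℤ)) by push_cast; ring,
        show (-(n : ℤ) - 1) = -(((n + 1 : ℕ) : ℤ)) by push_cast; ring,
        zpow_neg, zpow_neg, zpow_natCast, zpow_natCast]
      have hfe : ((Nat.factorial (e + 1) : ℝ)) = ((e : ℝ) + 1) * (Nat.factorial e : ℝ) := by
        rw [Nat.factorial_succ]; push_cast; ring
      rw [hfe]
      generalize (q⁻¹ * (q - 1) ^ 2 * (1 + q)) = c0
      generalize ((e : ℝ) + 1) = E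
      generalize ((Nat.factorial e : ℝ)) = F
      generalize q ^ (n + 1) = a
      generalize q ^ (n + 2) = b
      ring
    · have hpar2 : ¬ (n + 2 - j) % 2 = 0 := by omega
      simp only [if_neg hpar, if_neg hpar2]
      simp
  rw [key]
  ring

/-- closed form for the moments of Brownian motion on `T_q`. If
`m_0 = 1`, `m_1(t,x) = x` and
`m_k(t,x) = x^k + (q^{1-k}/c_q)(1-q^k)(1-q^{k-1}) ∫_0^t m_{k-2}(s,x) ds`
with `c_q = q⁻¹(q-1)²(1+q)`, then
`m_k(t,x) = Σ_{0≤j≤k, j≡k (2)} c_q^{-(k-j)/2} ((q;q)_k/(q;q)_j) q^{(j²-k²)/4}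
t^{(k-j)/2} x^j / ((k-j)/2)!`. -/
theorem moments_closed_form (q : ℝ) (hq : 1 < q) (m : ℕ → ℝ → ℝ → ℝ)
    (h0 : ∀ t x, m 0 t x = 1) (h1 : ∀ t x, m 1 t x = x)
    (hrec : ∀ k t x, m (k + 2) t x = x ^ (k + 2) +
      (q ^ (-(k : ℤ) - 1) / (q⁻¹ * (q - 1) ^ 2 * (1 + q))) * (1 - q ^ (k + 2)) *
        (1 - q ^ (k + 1)) * ∫ s in (0 : ℝ)..t, m k s x) :
    ∀ k t x, m k t x = ∑ j ∈ Finset.range (k + 1),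
      if (k - j) % 2 = 0 then
        (q⁻¹ * (q - 1) ^ 2 * (1 + q)) ^ (-(((k : ℤ) - j) / 2)) *
          ((∏ i ∈ Finset.range k, (1 - q ^ (i + 1))) /
            (∏ i ∈ Finset.range j, (1 - q ^ (i + 1)))) *
          q ^ (((j : ℤ) ^ 2 - (k : ℤ) ^ 2) / 4) *
          t ^ ((k - j) / 2) / (Nat.factorial ((k - j) / 2)) * x ^ j
      else 0 := by
  have main : ∀ k t x, m k t x = momRHS q k t x := by
    intro k
    induction k using Nat.twoStepInduction with
    | zero =>
      intro t x
      rw [h0]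
      simp [momRHS]
    | one =>
      intro t x
      rw [h1]
      have hne : (1 - q ^ (0 + 1)) ≠ 0 := by
        have : 1 < q ^ (0+1) := by simpa using hq
        intro h; linarith
      have hne1 : (1 - q) ≠ 0 := by intro h; linarith
      simp [momRHS, Finset.sum_range_succ]
      rw [div_self hne1, one_mul]
    | more n ih _ =>
      intro t x
      rw [hrec]
      simp only [ih]
      exact step_lemma q hq n t x
  intro k t x
  rw [main k t x, momRHS]
end

section
/- For fixed t > 0, x ∈ ℝ, and each integer k ≥ 0, lim_{q→1⁺} Σ_{m=0, m≡k mod 2}^{k} (q^{−1}(q−1)²(1+q))^{−(k−m)/2} ((q;q)_k/(q;q)_m) q^{(m²−k²)/4} t^{(k−m)/2} x^m / ((k−m)/2)! = Σ_{m=0, m≡k mod 2}^{k} (k!/(m!(k−m)!)) (1/2)^{(k−m)/2} ((k−m)!/((k−m)/2)!) t^{(k−m)/2} x^m, which equals the k-th moment of a Gaussian random variable with mean x and variance t. -/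
open Filter

open scoped NNReal ENNReal
open Finset Real MeasureTheory

noncomputable def gg (n : ℕ) (q : ℝ) : ℝ := ∏ i ∈ Finset.range n, (∑ j ∈ Finset.range (i+1), q ^ j)

lemma prod_one_sub_pow (n : ℕ) (q : ℝ) :
    ∏ i ∈ Finset.range n, (1 - q ^ (i + 1)) = (1 - q) ^ n * gg n q := by
  calc ∏ i ∈ Finset.range n, (1 - q ^ (i + 1))
      = ∏ i ∈ Finset.range n, ((1 - q) * ∑ j ∈ Finset.range (i+1), q ^ j) :=
        Finset.prod_congr rfl (fun i _ => by linear_combination geom_sum_mul q (i+1))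
    _ = (1 - q) ^ n * gg n q := by
        rw [Finset.prod_mul_distrib, Finset.prod_const, Finset.card_range, gg]

lemma gg_continuous (n : ℕ) : Continuous (gg n) := by
  unfold gg
  exact continuous_finset_prod _ fun i _ => continuous_finset_sum _ fun j _ => continuous_pow j

lemma gg_one (n : ℕ) : gg n 1 = n.factorial := by
  have h : gg n 1 = ∏ i ∈ Finset.range n, ((i + 1 : ℕ) : ℝ) := by simp [gg]
  rw [h, ← Nat.cast_prod, Finset.prod_range_add_one_eq_factorial]

lemma gg_pos {q : ℝ} (hq : 0 < q) (n : ℕ) : 0 < gg n q := by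
  refine Finset.prod_pos fun i _ => Finset.sum_pos (fun j _ => pow_pos hq j) ⟨0, by simp⟩

lemma term_tendsto (t x : ℝ) (j m : ℕ) (e : ℤ) :
    Tendsto (fun q : ℝ =>
      (q⁻¹ * (q - 1) ^ 2 * (1 + q)) ^ (-(m : ℤ)) *
        ((∏ i ∈ Finset.range (j + 2 * m), (1 - q ^ (i + 1))) /
          (∏ i ∈ Finset.range j, (1 - q ^ (i + 1)))) *
        q ^ e * t ^ m / (Nat.factorial m : ℝ) * x ^ j)
      (nhdsWithin 1 (Set.Ioi 1))
      (nhds (((2 : ℝ) ^ m)⁻¹ * (((j + 2 * m).factorial : ℝ) / (j.factorial : ℝ))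
        * t ^ m / (m.factorial : ℝ) * x ^ j)) := by
  set F : ℝ → ℝ := fun q =>
    ((q⁻¹ * (1 + q)) ^ m)⁻¹ * (gg (j + 2 * m) q / gg j q) * q ^ e * t ^ m
      / (Nat.factorial m : ℝ) * x ^ j with hFdef
  have hcont : ContinuousAt F 1 := by
    have a1 : ContinuousAt (fun q : ℝ => (q⁻¹ * (1 + q)) ^ m) 1 :=
      ((continuousAt_inv₀ one_ne_zero).mul (by fun_prop)).pow m
    have c1 : ContinuousAt (fun q : ℝ => ((q⁻¹ * (1 + q)) ^ m)⁻¹) 1 :=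
      a1.inv₀ (by norm_num)
    have c2 : ContinuousAt (fun q : ℝ => gg (j + 2 * m) q / gg j q) 1 :=
      ((gg_continuous _).continuousAt).div ((gg_continuous _).continuousAt)
        (by rw [gg_one]; positivity)
    have c3 : ContinuousAt (fun q : ℝ => q ^ e) 1 :=
      continuousAt_zpow₀ 1 e (Or.inl one_ne_zero)
    exact ((((c1.mul c2).mul c3).mul continuousAt_const).div_const _).mul continuousAt_const
  have h1 : Tendsto F (nhdsWithin 1 (Set.Ioi 1)) (nhds (F 1)) := hcont.continuousWithinAt
  have hF1 : F 1 = ((2 : ℝ) ^ m)⁻¹ * (((j + 2 * m).factorial : ℝ) / (j.factorial : ℝ))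
      * t ^ m / (m.factorial : ℝ) * x ^ j := by
    simp [hFdef, gg_one, one_zpow]
    norm_num
  rw [hF1] at h1
  refine h1.congr' ?_
  filter_upwards [self_mem_nhdsWithin] with q hq
  have hq1 : (1 : ℝ) < q := hq
  have hq0 : (0 : ℝ) < q := lt_trans one_pos hq1
  have hqne : q ≠ 0 := hq0.ne'
  have h1q : 1 - q ≠ 0 := by intro h; nlinarith
  have h1q' : 1 + q ≠ 0 := by positivity
  have hgj : gg j q ≠ 0 := (gg_pos hq0 j).ne'
  show F q = _
  rw [hFdef]
  simp only
  rw [zpow_neg, zpow_natCast, prod_one_sub_pow, prod_one_sub_pow,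
    show (q - 1) ^ 2 = (1 - q) ^ 2 from by ring]
  simp only [mul_pow]
  rw [← pow_mul]
  field_simp
  ring


lemma integrable_pow_gauss (n : ℕ) :
    Integrable (fun z : ℝ => z ^ n * Real.exp (-z ^ 2 / 2)) := by
  have h4 : Integrable (fun z : ℝ => Real.exp (-(4:ℝ)⁻¹ * z ^ 2)) :=
    integrable_exp_neg_mul_sq (by norm_num)
  refine (h4.const_mul ((n.factorial : ℝ) * Real.exp 1)).mono' ?_ ?_
  · exact ((continuous_pow n).mul (Real.continuous_exp.comp (by fun_prop))).aestronglyMeasurable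
  · filter_upwards with z
    have hf : (0:ℝ) < n.factorial := by positivity
    have h1 : |z| ^ n ≤ (n.factorial : ℝ) * Real.exp |z| := by
      have h := Real.pow_div_factorial_le_exp _ (abs_nonneg z) n
      calc |z| ^ n = (|z| ^ n / n.factorial) * n.factorial := by field_simp
        _ ≤ Real.exp |z| * n.factorial := by gcongr
        _ = (n.factorial : ℝ) * Real.exp |z| := mul_comm _ _
    have h2 : |z| - z ^ 2 / 2 ≤ 1 - z ^ 2 / 4 := by
      nlinarith [sq_nonneg (|z| - 2), sq_abs z]
    calc ‖z ^ n * Real.exp (-z ^ 2 / 2)‖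
        = |z| ^ n * Real.exp (-z ^ 2 / 2) := by
          rw [norm_mul, norm_pow, Real.norm_eq_abs, Real.norm_eq_abs,
            abs_of_pos (Real.exp_pos _)]
      _ ≤ ((n.factorial : ℝ) * Real.exp |z|) * Real.exp (-z ^ 2 / 2) := by
          gcongr
      _ = (n.factorial : ℝ) * Real.exp (|z| - z ^ 2 / 2) := by
          rw [mul_assoc, ← Real.exp_add]; ring_nf
      _ ≤ (n.factorial : ℝ) * Real.exp (1 - z ^ 2 / 4) := by
          gcongr
      _ = (n.factorial : ℝ) * Real.exp 1 * Real.exp (-(4:ℝ)⁻¹ * z ^ 2) := by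
          rw [mul_assoc, ← Real.exp_add]; ring_nf

lemma J_rec (n : ℕ) :
    ∫ z : ℝ, z ^ (n + 2) * Real.exp (-z ^ 2 / 2)
      = ((n : ℝ) + 1) * ∫ z : ℝ, z ^ n * Real.exp (-z ^ 2 / 2) := by
  have hu : ∀ z : ℝ, HasDerivAt (fun y : ℝ => y ^ (n + 1)) (((n : ℝ) + 1) * z ^ n) z := by
    intro z
    simpa using hasDerivAt_pow (n + 1) z
  have hv : ∀ z : ℝ, HasDerivAt (fun y : ℝ => Real.exp (-y ^ 2 / 2))
      (-z * Real.exp (-z ^ 2 / 2)) z := by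
    intro z
    have h1 : HasDerivAt (fun y : ℝ => -y ^ 2 / 2) (-z) z := by
      have := ((hasDerivAt_pow 2 z).neg.div_const 2)
      simpa using this.congr_deriv (by push_cast; ring)
    simpa [mul_comm] using h1.exp
  have i1 : Integrable ((fun y : ℝ => y ^ (n + 1)) * fun z : ℝ => -z * Real.exp (-z ^ 2 / 2)) := by
    have heq : ((fun y : ℝ => y ^ (n + 1)) * fun z : ℝ => -z * Real.exp (-z ^ 2 / 2))
        = fun z : ℝ => -(z ^ (n + 2) * Real.exp (-z ^ 2 / 2)) := by
      funext z; simp [Pi.mul_apply]; ring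
    rw [heq]; exact (integrable_pow_gauss (n + 2)).neg
  have i2 : Integrable ((fun z : ℝ => ((n : ℝ) + 1) * z ^ n) * fun z : ℝ => Real.exp (-z ^ 2 / 2)) := by
    have heq : ((fun z : ℝ => ((n : ℝ) + 1) * z ^ n) * fun z : ℝ => Real.exp (-z ^ 2 / 2))
        = fun z : ℝ => ((n : ℝ) + 1) * (z ^ n * Real.exp (-z ^ 2 / 2)) := by
      funext z; simp [Pi.mul_apply]; ring
    rw [heq]; exact (integrable_pow_gauss n).const_mul _
  have i3 : Integrable ((fun y : ℝ => y ^ (n + 1)) * fun z : ℝ => Real.exp (-z ^ 2 / 2)) := by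
    have heq : ((fun y : ℝ => y ^ (n + 1)) * fun z : ℝ => Real.exp (-z ^ 2 / 2))
        = fun z : ℝ => z ^ (n + 1) * Real.exp (-z ^ 2 / 2) := by
      funext z; simp [Pi.mul_apply]
    rw [heq]; exact integrable_pow_gauss (n + 1)
  have key := integral_mul_deriv_eq_deriv_mul_of_integrable (fun z _ => hu z) (fun z _ => hv z) i1 i2 i3
  have e1 : ∫ z : ℝ, z ^ (n + 1) * (-z * Real.exp (-z ^ 2 / 2))
      = - ∫ z : ℝ, z ^ (n + 2) * Real.exp (-z ^ 2 / 2) := by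
    rw [show (fun z : ℝ => z ^ (n + 1) * (-z * Real.exp (-z ^ 2 / 2)))
        = fun z : ℝ => -(z ^ (n + 2) * Real.exp (-z ^ 2 / 2)) from by funext z; ring,
      integral_neg]
  have e2 : ∫ z : ℝ, ((n : ℝ) + 1) * z ^ n * Real.exp (-z ^ 2 / 2)
      = ((n : ℝ) + 1) * ∫ z : ℝ, z ^ n * Real.exp (-z ^ 2 / 2) := by
    rw [show (fun z : ℝ => ((n : ℝ) + 1) * z ^ n * Real.exp (-z ^ 2 / 2))
        = fun z : ℝ => ((n : ℝ) + 1) * (z ^ n * Real.exp (-z ^ 2 / 2)) from by funext z; ring,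
      integral_const_mul]
  rw [e1] at key
  linarith [key, e2]

lemma J_zero : ∫ z : ℝ, Real.exp (-z ^ 2 / 2) = Real.sqrt (2 * π) := by
  rw [show (fun z : ℝ => Real.exp (-z ^ 2 / 2)) = fun z : ℝ => Real.exp (-(1/2) * z ^ 2) from by
    funext z; ring_nf, integral_gaussian]
  norm_num [mul_comm]

lemma J_even (m : ℕ) :
    ∫ z : ℝ, z ^ (2 * m) * Real.exp (-z ^ 2 / 2)
      = (((2 * m).factorial : ℝ) / (2 ^ m * m.factorial)) * Real.sqrt (2 * π) := by
  induction m with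
  | zero => simpa using J_zero
  | succ m ih =>
    have h := J_rec (2 * m)
    rw [show 2 * (m + 1) = 2 * m + 2 from by ring, h, ih]
    have hfac : ((2 * (m + 1)).factorial : ℝ)
        = (2 * m + 2) * ((2 * m + 1) * ((2 * m).factorial : ℝ)) := by
      rw [show 2 * (m + 1) = (2 * m + 1) + 1 from by ring, Nat.factorial_succ,
        Nat.factorial_succ]
      push_cast; ring
    rw [show 2 * m + 2 = 2 * (m + 1) from by ring, hfac, Nat.factorial_succ]
    have f1 : ((2 * m).factorial : ℝ) ≠ 0 := Nat.cast_ne_zero.mpr (Nat.factorial_ne_zero _)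
    have f2 : (m.factorial : ℝ) ≠ 0 := Nat.cast_ne_zero.mpr (Nat.factorial_ne_zero _)
    have f3 : (2 : ℝ) ^ m ≠ 0 := by positivity
    push_cast
    field_simp
    ring

lemma J_odd (n : ℕ) (hn : n % 2 = 1) : ∫ z : ℝ, z ^ n * Real.exp (-z ^ 2 / 2) = 0 := by
  have h := integral_neg_eq_self (fun z : ℝ => z ^ n * Real.exp (-z ^ 2 / 2)) volume
  have heq : (fun z : ℝ => (-z) ^ n * Real.exp (-(-z) ^ 2 / 2))
      = fun z : ℝ => -(z ^ n * Real.exp (-z ^ 2 / 2)) := by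
    funext z
    have : (-z) ^ n = -z ^ n := Odd.neg_pow (Nat.odd_iff.mpr hn) z
    rw [show -(-z) ^ 2 / 2 = -z ^ 2 / 2 from by ring, this]
    ring
  rw [heq, integral_neg] at h
  linarith

open ProbabilityTheory in
lemma gauss01_moment (n : ℕ) :
    ∫ z, z ^ n ∂(gaussianReal 0 1)
      = if n % 2 = 0 then ((n.factorial : ℝ) / (2 ^ (n / 2) * (n / 2).factorial)) else 0 := by
  have hsqrt : Real.sqrt (2 * π) ≠ 0 := by positivity
  have hpdf : ∀ z : ℝ, gaussianPDFReal 0 1 z = (Real.sqrt (2 * π))⁻¹ * Real.exp (-z ^ 2 / 2) := by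
    intro z
    simp [gaussianPDFReal]
  rw [gaussianReal_of_var_ne_zero 0 one_ne_zero,
    show gaussianPDF 0 1 = fun y => ((Real.toNNReal (gaussianPDFReal 0 1 y) : ℝ≥0) : ℝ≥0∞) from rfl,
    integral_withDensity_eq_integral_smul ((measurable_gaussianPDFReal 0 1).real_toNNReal)
      (fun z : ℝ => z ^ n)]
  have : ∀ z : ℝ, (Real.toNNReal (gaussianPDFReal 0 1 z) : ℝ≥0) • z ^ n
      = (Real.sqrt (2 * π))⁻¹ * (z ^ n * Real.exp (-z ^ 2 / 2)) := by
    intro z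
    rw [NNReal.smul_def, smul_eq_mul, Real.coe_toNNReal _ (gaussianPDFReal_nonneg 0 1 z), hpdf]
    ring
  rw [show (fun z : ℝ => (Real.toNNReal (gaussianPDFReal 0 1 z) : ℝ≥0) • z ^ n)
      = fun z : ℝ => (Real.sqrt (2 * π))⁻¹ * (z ^ n * Real.exp (-z ^ 2 / 2)) from funext this,
    integral_const_mul]
  rcases Nat.even_or_odd n with he | ho
  · obtain ⟨m, hm⟩ := he
    have hn2 : n % 2 = 0 := by omega
    have hnd : n / 2 = m := by omega
    rw [if_pos hn2, show n = 2 * m from by omega, J_even, show 2 * m / 2 = m from by omega]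
    field_simp
  · have hn1 : n % 2 = 1 := Nat.odd_iff.mp ho
    rw [if_neg (by omega), J_odd n hn1, mul_zero]

open ProbabilityTheory in
lemma integrable_pow_gauss01 (n : ℕ) : Integrable (fun z : ℝ => z ^ n) (gaussianReal 0 1) := by
  rw [gaussianReal_of_var_ne_zero 0 one_ne_zero,
    integrable_withDensity_iff (measurable_gaussianPDF 0 1)
      (Eventually.of_forall fun z => ENNReal.ofReal_lt_top)]
  have heq : (fun z : ℝ => z ^ n * (gaussianPDF 0 1 z).toReal)
      = fun z : ℝ => (Real.sqrt (2 * π))⁻¹ * (z ^ n * Real.exp (-z ^ 2 / 2)) := by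
    funext z
    rw [gaussianPDF, ENNReal.toReal_ofReal (gaussianPDFReal_nonneg 0 1 z),
      show gaussianPDFReal 0 1 z = (Real.sqrt (2 * π))⁻¹ * Real.exp (-z ^ 2 / 2) from by
        simp [gaussianPDFReal]]
    ring
  rw [heq]
  exact (integrable_pow_gauss n).const_mul _

open ProbabilityTheory in
lemma gaussianReal_eq_map (t : ℝ) (ht : 0 < t) (x : ℝ) :
    gaussianReal x (Real.toNNReal t)
      = Measure.map (fun z => Real.sqrt t * z + x) (gaussianReal 0 1) := by
  have hcomp : (fun z : ℝ => Real.sqrt t * z + x)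
      = (fun y : ℝ => y + x) ∘ (fun z : ℝ => Real.sqrt t * z) := rfl
  rw [hcomp, ← Measure.map_map (measurable_add_const x) (measurable_const_mul _),
    gaussianReal_map_const_mul (Real.sqrt t), gaussianReal_map_add_const x]
  congr 1
  · simp
  · ext
    simp [Real.sq_sqrt ht.le, Real.coe_toNNReal', max_eq_left ht.le]

open ProbabilityTheory in
lemma gaussian_moment (t : ℝ) (ht : 0 < t) (x : ℝ) (k : ℕ) :
    ∫ y, y ^ k ∂(gaussianReal x (Real.toNNReal t))
      = ∑ i ∈ Finset.range (k + 1),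
          ((Real.sqrt t) ^ i * (x ^ (k - i) * (k.choose i : ℝ)))
            * (if i % 2 = 0 then ((i.factorial : ℝ) / (2 ^ (i / 2) * (i / 2).factorial)) else 0) := by
  rw [gaussianReal_eq_map t ht x,
    integral_map (by fun_prop) ((continuous_pow k).aestronglyMeasurable)]
  have hexp : ∀ z : ℝ, (Real.sqrt t * z + x) ^ k
      = ∑ i ∈ Finset.range (k + 1),
          ((Real.sqrt t) ^ i * (x ^ (k - i) * (k.choose i : ℝ))) * z ^ i := by
    intro z
    rw [add_pow]
    exact Finset.sum_congr rfl fun i _ => by rw [mul_pow]; ring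
  simp only [hexp]
  rw [integral_finset_sum _ (fun i _ => ((integrable_pow_gauss01 i).const_mul _))]
  exact Finset.sum_congr rfl fun i hi => by rw [integral_const_mul, gauss01_moment i]

lemma sum_match (t : ℝ) (ht : 0 < t) (x : ℝ) (k : ℕ) :
    (∑ j ∈ Finset.range (k + 1),
        if (k - j) % 2 = 0 then
          ((Nat.factorial k : ℝ) / (Nat.factorial j * Nat.factorial (k - j))) *
            (1 / 2) ^ ((k - j) / 2) *
            ((Nat.factorial (k - j) : ℝ) / Nat.factorial ((k - j) / 2)) *
            t ^ ((k - j) / 2) * x ^ j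
        else 0)
      = ∑ i ∈ Finset.range (k + 1),
          ((Real.sqrt t) ^ i * (x ^ (k - i) * (k.choose i : ℝ)))
            * (if i % 2 = 0 then ((i.factorial : ℝ) / (2 ^ (i / 2) * (i / 2).factorial)) else 0) := by
  rw [← Finset.sum_range_reflect]
  refine Finset.sum_congr rfl fun i hi => ?_
  have hik : i ≤ k := by
    have := Finset.mem_range.mp hi; omega
  have h1 : k + 1 - 1 - i = k - i := by omega
  have h2 : k - (k - i) = i := by omega
  rw [h1, h2]
  by_cases hp : i % 2 = 0
  · rw [if_pos hp, if_pos hp]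
    obtain ⟨m, hm⟩ : ∃ m, i = 2 * m := ⟨i / 2, by omega⟩
    subst hm
    rw [show 2 * m / 2 = m from by omega,
      show (Real.sqrt t) ^ (2 * m) = t ^ m from by rw [pow_mul, Real.sq_sqrt ht.le]]
    have key := Nat.choose_mul_factorial_mul_factorial hik
    have keyR : ((k.choose (2 * m) : ℝ)) * (2 * m).factorial * (k - 2 * m).factorial
        = k.factorial := by exact_mod_cast congrArg (Nat.cast : ℕ → ℝ) key
    have f1 : ((2 * m).factorial : ℝ) ≠ 0 := Nat.cast_ne_zero.mpr (Nat.factorial_ne_zero _)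
    have f2 : ((k - 2 * m).factorial : ℝ) ≠ 0 := Nat.cast_ne_zero.mpr (Nat.factorial_ne_zero _)
    have f3 : (m.factorial : ℝ) ≠ 0 := Nat.cast_ne_zero.mpr (Nat.factorial_ne_zero _)
    rw [← keyR]
    simp only [one_div, inv_pow]
    field_simp
  · rw [if_neg hp, if_neg hp, mul_zero]



/-- as `q → 1⁺`, the `k`-th moment of Brownian motion on `T_q` converges to
the `k`-th moment of a Gaussian with mean `x` and variance `t`:
`lim_{q→1⁺} Σ_{j≡k(2)} c_q^{-(k-j)/2} ((q;q)_k/(q;q)_j) q^{(j²-k²)/4} t^{(k-j)/2} x^j/((k-j)/2)!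
= Σ_{j≡k(2)} (k!/(j!(k-j)!)) (1/2)^{(k-j)/2} ((k-j)!/((k-j)/2)!) t^{(k-j)/2} x^j`,
and the latter equals the `k`-th moment of the Gaussian with mean `x`, variance `t`. -/
theorem moments_tendsto_gaussian (t : ℝ) (ht : 0 < t) (x : ℝ) (k : ℕ) :
    Tendsto (fun q : ℝ => ∑ j ∈ Finset.range (k + 1),
        if (k - j) % 2 = 0 then
          (q⁻¹ * (q - 1) ^ 2 * (1 + q)) ^ (-(((k : ℤ) - j) / 2)) *
            ((∏ i ∈ Finset.range k, (1 - q ^ (i + 1))) /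
              (∏ i ∈ Finset.range j, (1 - q ^ (i + 1)))) *
            q ^ (((j : ℤ) ^ 2 - (k : ℤ) ^ 2) / 4) *
            t ^ ((k - j) / 2) / (Nat.factorial ((k - j) / 2)) * x ^ j
        else 0)
      (nhdsWithin 1 (Set.Ioi 1))
      (nhds (∑ j ∈ Finset.range (k + 1),
        if (k - j) % 2 = 0 then
          ((Nat.factorial k : ℝ) / (Nat.factorial j * Nat.factorial (k - j))) *
            (1 / 2) ^ ((k - j) / 2) *
            ((Nat.factorial (k - j) : ℝ) / Nat.factorial ((k - j) / 2)) *
            t ^ ((k - j) / 2) * x ^ j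
        else 0))
    ∧ (∑ j ∈ Finset.range (k + 1),
        if (k - j) % 2 = 0 then
          ((Nat.factorial k : ℝ) / (Nat.factorial j * Nat.factorial (k - j))) *
            (1 / 2) ^ ((k - j) / 2) *
            ((Nat.factorial (k - j) : ℝ) / Nat.factorial ((k - j) / 2)) *
            t ^ ((k - j) / 2) * x ^ j
        else 0)
      = ∫ y, y ^ k ∂(ProbabilityTheory.gaussianReal x (Real.toNNReal t)) := by
  constructor
  · apply tendsto_finset_sum
    intro j hj
    have hjk : j ≤ k := by have := Finset.mem_range.mp hj; omega
    by_cases hpar : (k - j) % 2 = 0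
    · simp only [if_pos hpar]
      obtain ⟨m, hm⟩ : ∃ m, k - j = 2 * m := ⟨(k - j) / 2, by omega⟩
      have h2 : (k - j) / 2 = m := by omega
      have h3 : (-(((k : ℤ) - (j : ℤ)) / 2)) = -(m : ℤ) := by omega
      have hk' : k = j + 2 * m := by omega
      have f1 : (j.factorial : ℝ) ≠ 0 := Nat.cast_ne_zero.mpr (Nat.factorial_ne_zero _)
      have f2 : ((2 * m).factorial : ℝ) ≠ 0 := Nat.cast_ne_zero.mpr (Nat.factorial_ne_zero _)
      have f3 : (m.factorial : ℝ) ≠ 0 := Nat.cast_ne_zero.mpr (Nat.factorial_ne_zero _)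
      have hval : ((Nat.factorial k : ℝ) / (Nat.factorial j * Nat.factorial (k - j))) *
            (1 / 2) ^ ((k - j) / 2) *
            ((Nat.factorial (k - j) : ℝ) / Nat.factorial ((k - j) / 2)) *
            t ^ ((k - j) / 2) * x ^ j
          = ((2 : ℝ) ^ m)⁻¹ * ((k.factorial : ℝ) / (j.factorial : ℝ)) * t ^ m
              / (m.factorial : ℝ) * x ^ j := by
        rw [h2, hm]
        simp only [one_div, inv_pow]
        field_simp
      rw [hval]
      simp only [h2, h3]
      simp only [hk']
      exact term_tendsto t x j m _
    · simp only [if_neg hpar]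
      exact tendsto_const_nhds
  · rw [gaussian_moment t ht x k]
    exact sum_match t ht x k
end

section
/- For 0 < p < 1 and w, c with |w| < 1, |c| < 1: (w; p)_∞ · ₁φ₁(0; w; p; c) = (c; p)_∞ · ₁φ₁(0; c; p; w), where ₁φ₁(0; b; p; z) = Σ_{k≥0} ((−1)^k p^{k(k−1)/2} z^k)/((b;p)_k (p;p)_k). -/
set_option maxHeartbeats 1000000


/-- The finite q-Pochhammer symbol `(z; p)_k`. -/
noncomputable def qPoch (z p : ℝ) (k : ℕ) : ℝ := ∏ j ∈ Finset.range k, (1 - z * p ^ j)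

/-- The infinite q-Pochhammer symbol `(z; p)_∞`. -/
noncomputable def qPochInf (z p : ℝ) : ℝ := ∏' j : ℕ, (1 - z * p ^ j)

/-- The basic hypergeometric series
`₁φ₁(0; b; p; z) = Σ_{k≥0} (-1)^k p^{k(k-1)/2} z^k / ((b;p)_k (p;p)_k)`. -/
noncomputable def phi11 (b p z : ℝ) : ℝ :=
  ∑' k : ℕ, ((-1) ^ k * p ^ (k * (k - 1) / 2) * z ^ k) / (qPoch b p k * qPoch p p k)

open Finset Filter Topology

namespace Phi11Proof

variable {p w c z : ℝ}

/-- Uniform positive lower bound for `(p;p)_k`. -/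
noncomputable def Cp (p : ℝ) : ℝ := Real.exp (-(p / (1 - p) / (1 - p)))

lemma Cp_pos (p : ℝ) : 0 < Cp p := Real.exp_pos _

lemma sum_pow_le (hp0 : 0 < p) (hp1 : p < 1) (k : ℕ) :
    ∑ j ∈ Finset.range k, p ^ j ≤ (1 - p)⁻¹ := by
  have h := Summable.sum_le_tsum (Finset.range k) (fun j _ => by positivity)
    (summable_geometric_of_lt_one hp0.le hp1)
  simpa [tsum_geometric_of_lt_one hp0.le hp1] using h

lemma qPoch_p_lb (hp0 : 0 < p) (hp1 : p < 1) (k : ℕ) : Cp p ≤ qPoch p p k := by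
  have h1p : 0 < 1 - p := by linarith
  have hterm : ∀ j ∈ Finset.range k, Real.exp (-(p ^ (j + 1) / (1 - p))) ≤ 1 - p * p ^ j := by
    intro j _
    have hpj : p ^ (j + 1) ≤ p := by
      calc p ^ (j + 1) ≤ p ^ 1 := pow_le_pow_of_le_one hp0.le hp1.le (by omega)
        _ = p := pow_one p
    have hpj0 : 0 < p ^ (j + 1) := pow_pos hp0 _
    have h2 : 0 < 1 - p ^ (j + 1) := by linarith
    have h3 : p ^ (j + 1) / (1 - p ^ (j + 1)) ≤ p ^ (j + 1) / (1 - p) := by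
      gcongr
    have h4 := Real.add_one_le_exp (p ^ (j + 1) / (1 - p))
    have h5 : (1 - p ^ (j + 1))⁻¹ = p ^ (j + 1) / (1 - p ^ (j + 1)) + 1 := by field_simp; ring
    have ht : (1 - p ^ (j + 1))⁻¹ ≤ Real.exp (p ^ (j + 1) / (1 - p)) := by
      rw [h5]; linarith
    have hmul : p * p ^ j = p ^ (j + 1) := by ring
    rw [hmul, Real.exp_neg]
    calc (Real.exp (p ^ (j + 1) / (1 - p)))⁻¹ ≤ ((1 - p ^ (j + 1))⁻¹)⁻¹ := by
          apply inv_anti₀ (by positivity) ht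
      _ = 1 - p ^ (j + 1) := inv_inv _
  calc Cp p ≤ ∏ j ∈ Finset.range k, Real.exp (-(p ^ (j + 1) / (1 - p))) := by
        rw [← Real.exp_sum]
        apply Real.exp_le_exp.2
        have hs : ∑ j ∈ Finset.range k, p ^ (j + 1) ≤ p / (1 - p) := by
          have he : ∑ j ∈ Finset.range k, p ^ (j + 1) = p * ∑ j ∈ Finset.range k, p ^ j := by
            rw [Finset.mul_sum]
            exact Finset.sum_congr rfl fun j _ => by ring
          rw [he, div_eq_mul_inv]
          exact mul_le_mul_of_nonneg_left (sum_pow_le hp0 hp1 k) hp0.le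
        have he2 : ∑ j ∈ Finset.range k, -(p ^ (j + 1) / (1 - p))
            = -((∑ j ∈ Finset.range k, p ^ (j + 1)) / (1 - p)) := by
          rw [Finset.sum_neg_distrib, ← Finset.sum_div]
        rw [he2]
        have h6 : (∑ j ∈ Finset.range k, p ^ (j + 1)) / (1 - p) ≤ (p / (1 - p)) / (1 - p) := by
          gcongr
        linarith
    _ ≤ ∏ j ∈ Finset.range k, (1 - p * p ^ j) :=
        Finset.prod_le_prod (fun j _ => (Real.exp_pos _).le) hterm
    _ = qPoch p p k := rfl

lemma abs_mul_pow_lt (hp0 : 0 < p) (hp1 : p < 1) (hz : |z| < 1) (n : ℕ) : |z * p ^ n| < 1 := by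
  rw [abs_mul, abs_pow, abs_of_pos hp0]
  calc |z| * p ^ n ≤ |z| * 1 := by
        gcongr
        exact pow_le_one₀ hp0.le hp1.le
    _ < 1 := by simpa using hz

lemma qPoch_pos (hp0 : 0 < p) (hp1 : p < 1) (hz : |z| < 1) (k : ℕ) : 0 < qPoch z p k := by
  apply Finset.prod_pos
  intro j _
  have h1 := abs_mul_pow_lt hp0 hp1 hz j
  have := (abs_lt.1 h1).2
  linarith

/-- Summand of the q-exponential (Euler) series. -/
noncomputable def aa (p z : ℝ) (k : ℕ) : ℝ :=
  (-1) ^ k * p ^ (k * (k - 1) / 2) * z ^ k / qPoch p p k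

/-- The q-exponential (Euler) series. -/
noncomputable def S (p z : ℝ) : ℝ := ∑' k, aa p z k

lemma hp_abs (hp0 : 0 < p) (hp1 : p < 1) : |p| < 1 := by rw [abs_of_pos hp0]; exact hp1

lemma abs_aa_le (hp0 : 0 < p) (hp1 : p < 1) (z : ℝ) (k : ℕ) :
    |aa p z k| ≤ |z| ^ k / Cp p := by
  have hQ := qPoch_p_lb hp0 hp1 k
  have hQpos := qPoch_pos hp0 hp1 (hp_abs hp0 hp1) k
  rw [aa, abs_div, abs_mul, abs_mul, abs_pow, abs_pow, abs_pow, abs_neg, abs_one, one_pow,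
    one_mul, abs_of_pos hQpos, abs_of_pos hp0]
  apply div_le_div₀ (by positivity) ?_ (Cp_pos p) hQ
  calc p ^ (k * (k - 1) / 2) * |z| ^ k ≤ 1 * |z| ^ k := by
        gcongr
        exact pow_le_one₀ hp0.le hp1.le
    _ = |z| ^ k := one_mul _

lemma summable_bound (hp0 : 0 < p) (hp1 : p < 1) (hz : |z| < 1) :
    Summable fun k : ℕ => |z| ^ k / Cp p := by
  simpa [div_eq_mul_inv] using
    (summable_geometric_of_lt_one (abs_nonneg z) hz).mul_right (Cp p)⁻¹

lemma summable_aa (hp0 : 0 < p) (hp1 : p < 1) (hz : |z| < 1) : Summable (aa p z) := by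
  apply summable_abs_iff.mp
  exact Summable.of_nonneg_of_le (fun k => abs_nonneg _) (abs_aa_le hp0 hp1 z)
    (summable_bound hp0 hp1 hz)

lemma tri (k : ℕ) : (k + 1) * k / 2 = k * (k - 1) / 2 + k := by
  have h : (k + 1) * k = k * (k - 1) + 2 * k := by
    cases k with
    | zero => rfl
    | succ m => simp [Nat.succ_sub_one]; ring
  rw [h, Nat.add_mul_div_left _ _ (by norm_num : 0 < 2)]

lemma qPoch_succ (z p : ℝ) (k : ℕ) :
    qPoch z p (k + 1) = qPoch z p k * (1 - z * p ^ k) := Finset.prod_range_succ _ _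

lemma S_funeq (hp0 : 0 < p) (hp1 : p < 1) (hz : |z| < 1) : S p z = (1 - z) * S p (p * z) := by
  have hpz : |p * z| < 1 := by
    rw [mul_comm]
    simpa using abs_mul_pow_lt hp0 hp1 hz 1
  have hsz := summable_aa hp0 hp1 hz
  have hspz := summable_aa hp0 hp1 hpz
  have hd : Summable fun k => aa p z k - aa p (p * z) k := hsz.sub hspz
  have key : ∀ k : ℕ, aa p z (k + 1) - aa p (p * z) (k + 1) = -z * aa p (p * z) k := by
    intro k
    have hQ : qPoch p p k ≠ 0 := (qPoch_pos hp0 hp1 (hp_abs hp0 hp1) k).ne'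
    have hpk1 : p ^ (k + 1) < 1 := pow_lt_one₀ hp0.le hp1 (by omega)
    have hpk : (1 : ℝ) - p * p ^ k ≠ 0 := by
      have : p * p ^ k = p ^ (k + 1) := by ring
      rw [this]; linarith
    have hT : (k + 1) * ((k + 1) - 1) / 2 = k * (k - 1) / 2 + k := by
      simpa using tri k
    rw [aa, aa, aa, qPoch_succ, hT, pow_add, pow_succ, pow_succ, mul_pow]
    field_simp
    ring
  have h2 : ∑' k, (aa p z k - aa p (p * z) k) = -z * S p (p * z) := by
    rw [Summable.tsum_eq_zero_add hd]
    have h0 : aa p z 0 - aa p (p * z) 0 = 0 := by simp [aa, qPoch]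
    rw [h0, zero_add]
    calc ∑' k : ℕ, (aa p z (k + 1) - aa p (p * z) (k + 1))
        = ∑' k : ℕ, -z * aa p (p * z) k := tsum_congr key
      _ = -z * S p (p * z) := tsum_mul_left
  have h3 : S p z - S p (p * z) = -z * S p (p * z) := by
    rw [← h2, S, S, ← Summable.tsum_sub hsz hspz]
  have : S p z = S p (p * z) + -z * S p (p * z) := by linarith
  rw [this]; ring

lemma S_iter (hp0 : 0 < p) (hp1 : p < 1) (hz : |z| < 1) (n : ℕ) :
    S p z = qPoch z p n * S p (z * p ^ n) := by
  induction n with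
  | zero => simp [qPoch]
  | succ n ih =>
    have hzn : |z * p ^ n| < 1 := abs_mul_pow_lt hp0 hp1 hz n
    have hfe := S_funeq hp0 hp1 hzn
    have harg : p * (z * p ^ n) = z * p ^ (n + 1) := by ring
    rw [ih, qPoch_succ, hfe, harg]
    ring

lemma S_sub_one (hp0 : 0 < p) (hp1 : p < 1) {u : ℝ} (hu : |u| ≤ p) :
    |S p u - 1| ≤ |u| * ((Cp p)⁻¹ * (1 - p)⁻¹) := by
  have hu1 : |u| < 1 := lt_of_le_of_lt hu hp1
  have hsum := summable_aa hp0 hp1 hu1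
  have habs : Summable fun k => |aa p u k| := summable_abs_iff.mpr hsum
  have habs' : Summable fun k => |aa p u (k + 1)| := by
    exact (summable_nat_add_iff 1).mpr habs
  have hb : Summable fun k : ℕ => |u| ^ (k + 1) / Cp p := by
    exact (summable_nat_add_iff 1).mpr (summable_bound hp0 hp1 hu1)
  have h0 : S p u - 1 = ∑' k, aa p u (k + 1) := by
    rw [S, Summable.tsum_eq_zero_add hsum]
    have : aa p u 0 = 1 := by simp [aa, qPoch]
    rw [this]; ring
  rw [h0]
  have h1 : |∑' k, aa p u (k + 1)| ≤ ∑' k, |aa p u (k + 1)| := by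
    simpa [Real.norm_eq_abs] using norm_tsum_le_tsum_norm (f := fun k => aa p u (k + 1)) habs'
  have h2 : ∑' k, |aa p u (k + 1)| ≤ ∑' k : ℕ, |u| ^ (k + 1) / Cp p :=
    Summable.tsum_le_tsum (fun k => abs_aa_le hp0 hp1 u (k + 1)) habs' hb
  have h3 : ∑' k : ℕ, |u| ^ (k + 1) / Cp p = |u| * (Cp p)⁻¹ * ∑' k : ℕ, |u| ^ k := by
    rw [← tsum_mul_left]
    exact tsum_congr fun k => by rw [pow_succ]; ring
  have h4 : ∑' k : ℕ, |u| ^ k = (1 - |u|)⁻¹ := tsum_geometric_of_lt_one (abs_nonneg u) hu1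
  have h5 : (1 - |u|)⁻¹ ≤ (1 - p)⁻¹ := by
    apply inv_anti₀ (by linarith) (by linarith)
  calc |∑' k, aa p u (k + 1)| ≤ ∑' k : ℕ, |u| ^ (k + 1) / Cp p := le_trans h1 h2
    _ = |u| * (Cp p)⁻¹ * (1 - |u|)⁻¹ := by rw [h3, h4]
    _ ≤ |u| * (Cp p)⁻¹ * (1 - p)⁻¹ := by
        exact mul_le_mul_of_nonneg_left h5 (mul_nonneg (abs_nonneg u) (inv_nonneg.2 (Cp_pos p).le))
    _ = |u| * ((Cp p)⁻¹ * (1 - p)⁻¹) := by ring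

lemma abs_log_one_sub_le (hz : |z| < 1) {u : ℝ} (hu : |u| ≤ |z|) :
    |Real.log (1 - u)| ≤ |u| / (1 - |z|) := by
  have h1 : 0 < 1 - |z| := by linarith
  have hu1 : |u| < 1 := lt_of_le_of_lt hu hz
  have hupos : 0 < 1 - u := by
    have := (abs_lt.1 hu1).2; linarith
  rcases le_or_gt 0 u with h | h
  · have h2 : 0 < 1 - u := hupos
    have h3 : Real.log (1 - u) ≤ 0 := Real.log_nonpos (by linarith [abs_lt.1 hu1]) (by linarith)
    rw [abs_of_nonpos h3]
    have h4 : -Real.log (1 - u) = Real.log (1 - u)⁻¹ := by rw [Real.log_inv]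
    rw [h4]
    have h5 : Real.log (1 - u)⁻¹ ≤ (1 - u)⁻¹ - 1 := Real.log_le_sub_one_of_pos (by positivity)
    have h6 : (1 - u)⁻¹ - 1 = u / (1 - u) := by field_simp; ring
    have h7 : u / (1 - u) ≤ u / (1 - |z|) := by
      apply div_le_div_of_nonneg_left h (by linarith) ?_
      have : |u| = u := abs_of_nonneg h
      linarith [this ▸ hu]
    have h8 : |u| = u := abs_of_nonneg h
    rw [h8]
    linarith
  · have h3 : 0 ≤ Real.log (1 - u) := Real.log_nonneg (by linarith)
    rw [abs_of_nonneg h3]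
    have h5 : Real.log (1 - u) ≤ (1 - u) - 1 := Real.log_le_sub_one_of_pos (by linarith)
    have h6 : |u| = -u := abs_of_neg h
    have h7 : (1 : ℝ) ≤ (1 - |z|)⁻¹ := (one_le_inv₀ h1).2 (by linarith)
    calc Real.log (1 - u) ≤ -u := by linarith
      _ = |u| := h6.symm
      _ = |u| * 1 := (mul_one _).symm
      _ ≤ |u| * (1 - |z|)⁻¹ := by gcongr
      _ = |u| / (1 - |z|) := by rw [div_eq_mul_inv]

lemma multipliable_qPoch (hp0 : 0 < p) (hp1 : p < 1) (hz : |z| < 1) :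
    Multipliable fun j : ℕ => 1 - z * p ^ j := by
  apply Real.multipliable_of_summable_log
    (fun j => by
      have := (abs_lt.1 (abs_mul_pow_lt hp0 hp1 hz j)).2
      show (0:ℝ) < 1 - z * p ^ j
      linarith)
    ?_
  have hb : Summable fun j : ℕ => |z| * p ^ j / (1 - |z|) := by
    simpa [mul_div_assoc, div_eq_mul_inv, mul_assoc] using
      ((summable_geometric_of_lt_one hp0.le hp1).mul_left |z|).mul_right (1 - |z|)⁻¹
  apply summable_abs_iff.mp
  apply Summable.of_nonneg_of_le (fun j => abs_nonneg _) ?_ hb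
  intro j
  have h1 : |z * p ^ j| ≤ |z| := by
    rw [abs_mul, abs_pow, abs_of_pos hp0]
    calc |z| * p ^ j ≤ |z| * 1 := by gcongr; exact pow_le_one₀ hp0.le hp1.le
      _ = |z| := mul_one _
  have := abs_log_one_sub_le hz h1
  calc |Real.log (1 - z * p ^ j)| ≤ |z * p ^ j| / (1 - |z|) := this
    _ = |z| * p ^ j / (1 - |z|) := by
        rw [abs_mul, abs_pow, abs_of_pos hp0]

lemma euler (hp0 : 0 < p) (hp1 : p < 1) (hz : |z| < 1) : qPochInf z p = S p z := by
  have hm := multipliable_qPoch hp0 hp1 hz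
  have h1 : Tendsto (fun n => qPoch z p n) atTop (𝓝 (qPochInf z p)) :=
    hm.hasProd.tendsto_prod_nat
  have h2 : Tendsto (fun n => S p (z * p ^ n) - 1) atTop (𝓝 0) := by
    apply squeeze_zero_norm' (a := fun n => p ^ n * ((Cp p)⁻¹ * (1 - p)⁻¹))
    · filter_upwards [eventually_ge_atTop 1] with n hn
      have hu : |z * p ^ n| ≤ p := by
        rw [abs_mul, abs_pow, abs_of_pos hp0]
        calc |z| * p ^ n ≤ 1 * p ^ n := by gcongr
          _ = p ^ n := one_mul _
          _ ≤ p ^ 1 := pow_le_pow_of_le_one hp0.le hp1.le hn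
          _ = p := pow_one p
      have := S_sub_one hp0 hp1 hu
      rw [Real.norm_eq_abs]
      calc |S p (z * p ^ n) - 1| ≤ |z * p ^ n| * ((Cp p)⁻¹ * (1 - p)⁻¹) := this
        _ ≤ p ^ n * ((Cp p)⁻¹ * (1 - p)⁻¹) := by
            apply mul_le_mul_of_nonneg_right ?_
              (mul_nonneg (inv_nonneg.2 (Cp_pos p).le) (inv_nonneg.2 (by linarith)))
            rw [abs_mul, abs_pow, abs_of_pos hp0]
            calc |z| * p ^ n ≤ 1 * p ^ n := by gcongr
              _ = p ^ n := one_mul _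
    · have := (tendsto_pow_atTop_nhds_zero_of_lt_one hp0.le hp1).mul_const
        ((Cp p)⁻¹ * (1 - p)⁻¹)
      simpa using this
  have h2' : Tendsto (fun n => S p (z * p ^ n)) atTop (𝓝 1) := by
    have := h2.add_const 1
    simpa using this
  have h3 : Tendsto (fun n => qPoch z p n * S p (z * p ^ n)) atTop (𝓝 (qPochInf z p * 1)) :=
    h1.mul h2'
  have h4 : (fun n => qPoch z p n * S p (z * p ^ n)) = fun _ => S p z :=
    funext fun n => (S_iter hp0 hp1 hz n).symm
  rw [h4] at h3
  have h5 : S p z = qPochInf z p * 1 := tendsto_nhds_unique tendsto_const_nhds h3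
  rw [h5, mul_one]

/-- Symmetric double-sum summand. -/
noncomputable def F (p w c : ℝ) (kj : ℕ × ℕ) : ℝ :=
  (-1) ^ (kj.1 + kj.2) *
    p ^ (kj.1 * (kj.1 - 1) / 2 + kj.2 * (kj.2 - 1) / 2 + kj.1 * kj.2) *
    c ^ kj.1 * w ^ kj.2 / (qPoch p p kj.1 * qPoch p p kj.2)

lemma abs_F_le (hp0 : 0 < p) (hp1 : p < 1) (w c : ℝ) (kj : ℕ × ℕ) :
    |F p w c kj| ≤ (|c| ^ kj.1 / Cp p) * (|w| ^ kj.2 / Cp p) := by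
  obtain ⟨k, j⟩ := kj
  have hQk := qPoch_p_lb hp0 hp1 k
  have hQj := qPoch_p_lb hp0 hp1 j
  have hQkpos := qPoch_pos hp0 hp1 (hp_abs hp0 hp1) k
  have hQjpos := qPoch_pos hp0 hp1 (hp_abs hp0 hp1) j
  have hE : (|c| ^ k / Cp p) * (|w| ^ j / Cp p) = |c| ^ k * |w| ^ j / (Cp p * Cp p) := by
    ring
  rw [hE, F, abs_div, abs_mul, abs_mul, abs_mul, abs_pow, abs_pow, abs_pow, abs_pow, abs_neg,
    abs_one, one_pow, one_mul, abs_mul, abs_of_pos hQkpos, abs_of_pos hQjpos, abs_of_pos hp0]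
  apply div_le_div₀ (by positivity) ?_ (mul_pos (Cp_pos p) (Cp_pos p)) ?_
  · calc p ^ (k * (k - 1) / 2 + j * (j - 1) / 2 + k * j) * |c| ^ k * |w| ^ j
        ≤ 1 * |c| ^ k * |w| ^ j := by
          gcongr
          exact pow_le_one₀ hp0.le hp1.le
      _ = |c| ^ k * |w| ^ j := by ring
  · exact mul_le_mul hQk hQj (Cp_pos p).le (by linarith [Cp_pos p, hQk])

lemma summable_F (hp0 : 0 < p) (hp1 : p < 1) (hw : |w| < 1) (hc : |c| < 1) :
    Summable (F p w c) := by
  apply summable_abs_iff.mp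
  apply Summable.of_nonneg_of_le (fun _ => abs_nonneg _) (abs_F_le hp0 hp1 w c)
  exact Summable.mul_of_nonneg (summable_bound hp0 hp1 hc) (summable_bound hp0 hp1 hw)
    (fun k => div_nonneg (by positivity) (Cp_pos p).le)
    (fun j => div_nonneg (by positivity) (Cp_pos p).le)

lemma lhs_eq (hp0 : 0 < p) (hp1 : p < 1) (hw : |w| < 1) (hc : |c| < 1) :
    qPochInf w p * phi11 w p c = ∑' kj : ℕ × ℕ, F p w c kj := by
  rw [euler hp0 hp1 hw, phi11, ← tsum_mul_left]
  have step1 : ∀ k : ℕ,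
      S p w * (((-1) ^ k * p ^ (k * (k - 1) / 2) * c ^ k) / (qPoch w p k * qPoch p p k))
        = ∑' j : ℕ, F p w c (k, j) := by
    intro k
    have hQw : qPoch w p k ≠ 0 := (qPoch_pos hp0 hp1 hw k).ne'
    have hQp : qPoch p p k ≠ 0 := (qPoch_pos hp0 hp1 (hp_abs hp0 hp1) k).ne'
    rw [S_iter hp0 hp1 hw k]
    have e1 : qPoch w p k * S p (w * p ^ k) *
        (((-1) ^ k * p ^ (k * (k - 1) / 2) * c ^ k) / (qPoch w p k * qPoch p p k))
        = ((-1) ^ k * p ^ (k * (k - 1) / 2) * c ^ k / qPoch p p k) * S p (w * p ^ k) := by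
      field_simp
    rw [e1, S, ← tsum_mul_left]
    apply tsum_congr
    intro j
    have hQpj : qPoch p p j ≠ 0 := (qPoch_pos hp0 hp1 (hp_abs hp0 hp1) j).ne'
    rw [aa, F]
    simp only
    rw [pow_add, pow_add, mul_pow, ← pow_mul]
    field_simp
    ring
  calc ∑' k : ℕ, S p w * (((-1) ^ k * p ^ (k * (k - 1) / 2) * c ^ k) /
          (qPoch w p k * qPoch p p k))
      = ∑' k : ℕ, ∑' j : ℕ, F p w c (k, j) := tsum_congr step1
    _ = ∑' kj : ℕ × ℕ, F p w c kj :=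
        (Summable.tsum_prod' (summable_F hp0 hp1 hw hc)
          fun k => (summable_F hp0 hp1 hw hc).prod_factor k).symm

end Phi11Proof

/-- for `0 < p < 1`, `|w| < 1`, `|c| < 1`,
`(w;p)_∞ ₁φ₁(0;w;p;c) = (c;p)_∞ ₁φ₁(0;c;p;w)`. -/
theorem phi11_symm (p w c : ℝ) (hp0 : 0 < p) (hp1 : p < 1) (hw : |w| < 1) (hc : |c| < 1) :
    qPochInf w p * phi11 w p c = qPochInf c p * phi11 c p w := by
  rw [Phi11Proof.lhs_eq hp0 hp1 hw hc, Phi11Proof.lhs_eq hp0 hp1 hc hw]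
  rw [← (Equiv.prodComm ℕ ℕ).tsum_eq (Phi11Proof.F p c w)]
  apply tsum_congr
  rintro ⟨k, j⟩
  simp only [Phi11Proof.F, Equiv.prodComm_apply, Prod.swap_prod_mk]
  have e1 : k + j = j + k := Nat.add_comm k j
  have e2 : k * (k - 1) / 2 + j * (j - 1) / 2 + k * j
      = j * (j - 1) / 2 + k * (k - 1) / 2 + j * k := by
    rw [Nat.mul_comm k j]
    generalize k * (k - 1) / 2 = A
    generalize j * (j - 1) / 2 = B
    generalize j * k = C
    omega
  rw [e1, e2]
  ring
end

section
/- Let q > 1, let N be as above with P{N = k} ∝ q^{−k}/(q^{−2};q^{−2})_k, independent of i.i.d. rate-1 exponentials T_i. Then E[exp(−λ q^{2N−1} Σ_{i=0}^∞ q^{−2i}T_i)] = ₁φ₁(0; −λ^{−1}q^{−1}; q^{−2}; −λ^{−1}q^{−2}) · e_{q^{−2}}(−λ/q) / e_{q^{−2}}(1/q). In particular, the Laplace transform H_{0,−∞}(λ) of the hitting time of 0 factorizes as a mixture over N of infinite convolutions of exponentials. -/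
open MeasureTheory ProbabilityTheory
open Real Filter Set Topology
open scoped ENNReal

/-- The q-exponential `e_p(z) = 1/(z;p)_∞`. -/
noncomputable def qExp (p z : ℝ) : ℝ := 1 / qPochInf z p

section Aux

lemma hasProd_rexp {f : ℕ → ℝ} {a : ℝ} (h : HasSum f a) :
    HasProd (fun i => rexp (f i)) (rexp a) := by
  have := (Real.continuous_exp.tendsto a).comp h
  simpa [HasProd, Function.comp_def, Real.exp_sum] using this

lemma hasProd_of_log {f : ℕ → ℝ} (hf : ∀ i, 0 < f i)
    (h : Summable fun i => Real.log (f i)) :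
    HasProd f (rexp (∑' i, Real.log (f i))) := by
  have := hasProd_rexp h.hasSum
  simpa [Real.exp_log (hf _)] using this

lemma summable_log_one_add {u : ℕ → ℝ} (hu : ∀ i, 0 ≤ u i) (h : Summable u) :
    Summable fun i => Real.log (1 + u i) := by
  refine Summable.of_nonneg_of_le (fun i => Real.log_nonneg (by linarith [hu i])) (fun i => ?_) h
  have := Real.log_le_sub_one_of_pos (x := 1 + u i) (by linarith [hu i])
  linarith

lemma my_tprod_nonneg {f : ℕ → ℝ} (hf : ∀ i, 0 ≤ f i) : 0 ≤ ∏' i, f i := by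
  by_cases h : Multipliable f
  · exact ge_of_tendsto' h.hasProd (fun s => Finset.prod_nonneg (fun i _ => hf i))
  · simp [tprod_eq_one_of_not_multipliable h]

lemma hasProd_one_add {u : ℕ → ℝ} (hu : ∀ i, 0 ≤ u i) (h : Summable u) :
    HasProd (fun i => 1 + u i) (rexp (∑' i, Real.log (1 + u i))) :=
  hasProd_of_log (fun i => by linarith [hu i]) (summable_log_one_add hu h)

lemma tprod_one_add_pos {u : ℕ → ℝ} (hu : ∀ i, 0 ≤ u i) (h : Summable u) :
    0 < ∏' i, (1 + u i) := by
  rw [(hasProd_one_add hu h).tprod_eq]; exact Real.exp_pos _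

lemma tprod_one_add_split {u : ℕ → ℝ} (hu : ∀ i, 0 ≤ u i) (h : Summable u) (k : ℕ) :
    ∏' i, (1 + u i) = (∏ j ∈ Finset.range k, (1 + u j)) * ∏' i, (1 + u (i + k)) := by
  have hlog := summable_log_one_add hu h
  have h1 := hasProd_one_add hu h
  have h2 := hasProd_one_add (fun i => hu (i+k)) ((summable_nat_add_iff k).2 h)
  rw [h1.tprod_eq, h2.tprod_eq, ← hlog.sum_add_tsum_nat_add k, Real.exp_add, Real.exp_sum]
  congr 1
  exact Finset.prod_congr rfl fun j _ => Real.exp_log (by linarith [hu j])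

lemma expMeasure_eq : expMeasure 1 = MeasureTheory.volume.withDensity (exponentialPDF 1) := rfl

lemma measurable_expPDF : Measurable (exponentialPDF 1) :=
  (measurable_exponentialPDFReal 1).ennreal_ofReal

lemma expMeasure_Iic (t : ℝ) :
    expMeasure 1 (Iic t) = ENNReal.ofReal (if 0 ≤ t then 1 - rexp (-t) else 0) := by
  rw [expMeasure_eq, withDensity_apply _ measurableSet_Iic]
  simpa using lintegral_exponentialPDF_eq_antiDeriv one_pos t

lemma laplace_exp {a : ℝ} (ha : 0 < a) :
    ∫ x, rexp (-(a * x)) ∂(expMeasure 1) = (a + 1)⁻¹ := by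
  have hm : Measurable fun x : ℝ => rexp (-(a * x)) := by fun_prop
  rw [integral_eq_lintegral_of_nonneg_ae (Eventually.of_forall fun x => (exp_pos _).le)
    hm.aestronglyMeasurable]
  rw [expMeasure_eq, lintegral_withDensity_eq_lintegral_mul _ measurable_expPDF
    hm.ennreal_ofReal]
  rw [← lintegral_add_compl (fun x => (exponentialPDF 1 * fun x => ENNReal.ofReal (rexp (-(a * x)))) x) (measurableSet_Iio (a := (0:ℝ)))]
  have h1 : ∫⁻ x in Iio 0, (exponentialPDF 1 * fun x => ENNReal.ofReal (rexp (-(a * x)))) x = 0 := by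
    rw [setLIntegral_congr_fun_ae (g := fun _ => (0:ℝ≥0∞)) measurableSet_Iio
      (ae_of_all _ (fun x (hx : x < 0) => by
        simp [Pi.mul_apply, exponentialPDF_of_neg hx]))]
    simp
  have h2 : ∫⁻ x in (Iio (0:ℝ))ᶜ, (exponentialPDF 1 * fun x => ENNReal.ofReal (rexp (-(a * x)))) x
      = ENNReal.ofReal ((a+1)⁻¹) := by
    rw [compl_Iio, ← setLIntegral_congr (Ioi_ae_eq_Ici (a := (0:ℝ)))]
    rw [setLIntegral_congr_fun_ae measurableSet_Ioi
      (ae_of_all _ (fun x (hx : 0 < x) => ?_))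
      (f := fun x => (exponentialPDF 1 * fun x => ENNReal.ofReal (rexp (-(a * x)))) x)
      (g := fun x => ENNReal.ofReal (rexp (-(a+1) * x)))]
    · rw [← ofReal_integral_eq_lintegral_ofReal
        (exp_neg_integrableOn_Ioi 0 (by linarith))
        (ae_of_all _ fun x => (exp_pos _).le)]
      simp_rw [neg_mul]
      rw [integral_comp_mul_left_Ioi (fun x => rexp (-x)) 0 (by linarith : (0:ℝ) < a+1)]
      simp [integral_exp_neg_Ioi, smul_eq_mul, integral_exp_Iic_zero]
    · show (exponentialPDF 1 * fun x => ENNReal.ofReal (rexp (-(a * x)))) x = _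
      rw [Pi.mul_apply, exponentialPDF_of_nonneg hx.le, ← ENNReal.ofReal_mul (by positivity)]
      congr 1
      rw [one_mul, ← Real.exp_add]
      ring_nf
  rw [h1, h2, zero_add, ENNReal.toReal_ofReal (by positivity)]

lemma expMoment_ne_top : ∫⁻ x, ENNReal.ofReal x ∂(expMeasure 1) ≠ ⊤ := by
  have hmeas : Measurable fun x : ℝ => ENNReal.ofReal x := measurable_id.ennreal_ofReal
  rw [expMeasure_eq, lintegral_withDensity_eq_lintegral_mul _ measurable_expPDF hmeas]
  rw [← lintegral_add_compl (fun x => (exponentialPDF 1 * fun x => ENNReal.ofReal x) x) (measurableSet_Iio (a := (0:ℝ)))]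
  have h1 : ∫⁻ x in Iio 0, (exponentialPDF 1 * fun x => ENNReal.ofReal x) x = 0 := by
    rw [setLIntegral_congr_fun_ae (g := fun _ => (0:ℝ≥0∞)) measurableSet_Iio
      (ae_of_all _ (fun x (hx : x < 0) => by
        simp [Pi.mul_apply, exponentialPDF_of_neg hx]))]
    simp
  rw [h1, zero_add]
  have h2 : ∫⁻ x in (Iio (0:ℝ))ᶜ, (exponentialPDF 1 * fun x => ENNReal.ofReal x) x
      ≤ ∫⁻ x in (Iio (0:ℝ))ᶜ, ENNReal.ofReal (2 * rexp (-2⁻¹ * x)) := by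
    refine lintegral_mono_ae (ae_of_all _ fun x => ?_)
    rcases lt_or_ge x 0 with hx | hx
    · simp [Pi.mul_apply, exponentialPDF_of_neg hx]
    · rw [Pi.mul_apply, exponentialPDF_of_nonneg hx, ← ENNReal.ofReal_mul (by positivity)]
      refine ENNReal.ofReal_le_ofReal ?_
      have hx2 : x ≤ 2 * rexp (2⁻¹ * x) := by
        have := Real.add_one_le_exp (2⁻¹ * x)
        nlinarith [Real.exp_pos (2⁻¹ * x)]
      have e1 : rexp (-(1*x)) = rexp (-(2⁻¹*x)) * rexp (-(2⁻¹*x)) := by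
        rw [← Real.exp_add]; ring_nf
      have e2 : rexp (2⁻¹*x) * rexp (-(2⁻¹*x)) = 1 := by
        rw [← Real.exp_add]; simp
      have e3 : (-2⁻¹ * x) = -(2⁻¹ * x) := by ring
      rw [e3, e1]
      nlinarith [Real.exp_pos (-(2⁻¹*x)), mul_le_mul_of_nonneg_left hx2
        (mul_pos (Real.exp_pos (-(2⁻¹*x))) (Real.exp_pos (-(2⁻¹*x)))).le]
  refine ne_top_of_le_ne_top ?_ h2
  rw [compl_Iio, ← setLIntegral_congr (Ioi_ae_eq_Ici (a := (0:ℝ)))]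
  rw [← ofReal_integral_eq_lintegral_ofReal
    (((exp_neg_integrableOn_Ioi 0 (by norm_num : (0:ℝ) < 2⁻¹))).const_mul 2)
    (ae_of_all _ fun x => by positivity)]
  exact ENNReal.ofReal_ne_top

lemma qp_inv {q : ℝ} : q ^ (-2 : ℤ) = (q^2)⁻¹ := by
  rw [zpow_neg]; norm_cast

lemma qterm_eq {q lam : ℝ} (hq : 1 < q) (hlam : 0 < lam) (k : ℕ) :
    ((-1)^k * (q^(-2:ℤ))^(k*(k-1)/2) * (-lam⁻¹ * q^(-2:ℤ))^k) /
      (qPoch (-lam⁻¹ * q⁻¹) (q^(-2:ℤ)) k * qPoch (q^(-2:ℤ)) (q^(-2:ℤ)) k)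
    = (q^k)⁻¹ / (qPoch (q^(-2:ℤ)) (q^(-2:ℤ)) k * ∏ j ∈ Finset.range k, (1 + lam * q^(2*j+1))) := by
  have hq0 : (0:ℝ) < q := lt_trans one_pos hq
  have hqne : q ≠ 0 := ne_of_gt hq0
  have hlamne : lam ≠ 0 := ne_of_gt hlam
  have hp : q ^ (-2 : ℤ) = (q^2)⁻¹ := qp_inv
  have hqp : ∀ n : ℕ, ((q^2)⁻¹ : ℝ)^n = (q^(2*n))⁻¹ := by
    intro n; rw [← inv_pow, ← pow_mul, inv_pow]
  set C : ℝ := ∏ j ∈ Finset.range k, (1 + lam * q^(2*j+1)) with hC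
  have hb : qPoch (-lam⁻¹ * q⁻¹) (q^(-2:ℤ)) k * (lam^k * q^(k^2)) = C := by
    rw [hC]
    clear hC
    induction k with
    | zero => simp [qPoch]
    | succ n ih =>
      rw [qPoch, Finset.prod_range_succ, Finset.prod_range_succ, ← qPoch]
      have hsq : (n+1)^2 = n^2 + (2*n+1) := by ring
      rw [pow_succ lam, hsq, pow_add q]
      have key : (1 - -lam⁻¹ * q⁻¹ * (q^(-2:ℤ))^n) * (lam * q^(2*n+1)) = 1 + lam * q^(2*n+1) := by
        rw [hp, hqp n]
        have h21 : q^(2*n+1) = q^(2*n) * q := by rw [pow_succ]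
        rw [h21]
        have h2n0 : (q:ℝ)^(2*n) ≠ 0 := pow_ne_zero _ hqne
        field_simp
        ring
      calc qPoch (-lam⁻¹ * q⁻¹) (q^(-2:ℤ)) n * (1 - -lam⁻¹ * q⁻¹ * (q^(-2:ℤ))^n) *
            (lam^n * lam * (q^(n^2) * q^(2*n+1)))
          = (qPoch (-lam⁻¹ * q⁻¹) (q^(-2:ℤ)) n * (lam^n * q^(n^2))) *
            ((1 - -lam⁻¹ * q⁻¹ * (q^(-2:ℤ))^n) * (lam * q^(2*n+1))) := by ring
        _ = _ := by rw [ih, key]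
  have hev : Even (k * (k-1)) := by
    rcases Nat.even_or_odd k with he | ho
    · exact he.mul_right _
    · rcases k with _ | m
      · simp
      · have : Even (m + 1 - 1) := by
          simpa using (Nat.Odd.sub_odd ho odd_one)
        exact this.mul_left _
  have heven : k*(k-1)/2*2 = k*(k-1) := Nat.div_mul_cancel hev.two_dvd
  have hnum : ((-1:ℝ))^k * (q^(-2:ℤ))^(k*(k-1)/2) * (-lam⁻¹ * q^(-2:ℤ))^k
      = (lam^k)⁻¹ * (q^(k^2) * q^k)⁻¹ := by
    rw [hp, hqp]
    have e1 : 2*(k*(k-1)/2) = k*(k-1) := by omega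
    rw [e1]
    have e2 : (-lam⁻¹ * (q^2)⁻¹ : ℝ)^k = (-1)^k * (lam⁻¹)^k * ((q^2)⁻¹)^k := by
      rw [show (-lam⁻¹ * (q^2)⁻¹ : ℝ) = (-1) * lam⁻¹ * (q^2)⁻¹ by ring, mul_pow, mul_pow]
    rw [e2, hqp]
    have e3 : ((-1:ℝ))^k * ((-1:ℝ))^k = 1 := by
      rw [← pow_add, Even.neg_one_pow ⟨k, by ring⟩]
    have e4 : (q:ℝ)^(k*(k-1)) * q^(2*k) = q^(k^2) * q^k := by
      rw [← pow_add, ← pow_add]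
      congr 1
      rcases k with _ | m
      · simp
      · simp only [Nat.add_sub_cancel]
        ring
    calc ((-1:ℝ))^k * (q^(k*(k-1)))⁻¹ * ((-1)^k * (lam⁻¹)^k * (q^(2*k))⁻¹)
        = (((-1:ℝ))^k * (-1)^k) * (lam⁻¹)^k * ((q^(k*(k-1)))⁻¹ * (q^(2*k))⁻¹) := by ring
      _ = (lam^k)⁻¹ * (q^(k^2) * q^k)⁻¹ := by
          rw [e3, ← mul_inv, e4, inv_pow]
          ring
  rw [hnum]
  have hPb : qPoch (-lam⁻¹ * q⁻¹) (q^(-2:ℤ)) k = C * (lam^k * q^(k^2))⁻¹ := by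
    rw [← hb]
    field_simp
  rw [hPb]
  have hne : ((lam^k * q^(k^2)) : ℝ) ≠ 0 := by positivity
  have e5 : (lam^k)⁻¹*((q^(k^2)*q^k))⁻¹ = (lam^k*q^(k^2))⁻¹ * (q^k)⁻¹ := by
    rw [mul_inv, mul_inv]; ring
  have e6 : C * (lam^k*q^(k^2))⁻¹ * qPoch (q^(-2:ℤ)) (q^(-2:ℤ)) k
      = (lam^k*q^(k^2))⁻¹ * (qPoch (q^(-2:ℤ)) (q^(-2:ℤ)) k * C) := by ring
  rw [e5, e6, mul_div_mul_left _ _ (inv_ne_zero hne)]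

end Aux

/-- let `N` have the q-Poisson law
`P{N = k} = (1/e_{q^{-2}}(1/q)) q^{-k}/(q^{-2};q^{-2})_k` and be independent of
`S = Σ_{i≥0} q^{-2i} T_i`, where the `T_i` are i.i.d. rate-1 exponentials. Then
`E[exp(-λ q^{2N-1} S)] = ₁φ₁(0; -λ⁻¹q⁻¹; q^{-2}; -λ⁻¹q^{-2}) e_{q^{-2}}(-λ/q) / e_{q^{-2}}(1/q)`,
which is the Laplace transform `H_{0,-∞}(λ)` of the hitting time of 0. -/
theorem hitting_time_laplace {Ω : Type*} [MeasurableSpace Ω] (μ : Measure Ω)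
    [IsProbabilityMeasure μ] (q : ℝ) (hq : 1 < q) (T : ℕ → Ω → ℝ) (N : Ω → ℕ)
    (hmeasT : ∀ i, Measurable (T i)) (hmeasN : Measurable N)
    (hindepT : iIndepFun T μ)
    (hposT : ∀ i, ∀ᵐ ω ∂μ, 0 ≤ T i ω)
    (hlawT : ∀ i, ∀ t : ℝ, 0 ≤ t → μ {ω | T i ω ≤ t} = ENNReal.ofReal (1 - Real.exp (-t)))
    (hlawN : ∀ k : ℕ, μ {ω | N ω = k}
      = ENNReal.ofReal ((1 / qExp (q ^ (-2 : ℤ)) (1 / q)) *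
          (q ^ (-(k : ℤ)) / qPoch (q ^ (-2 : ℤ)) (q ^ (-2 : ℤ)) k)))
    (hindepNS : IndepFun N (fun ω => ∑' i : ℕ, q ^ (-2 * (i : ℤ)) * T i ω) μ)
    (lam : ℝ) (hlam : 0 < lam) :
    ∫ ω, Real.exp (-lam * q ^ (2 * (N ω : ℤ) - 1) *
        ∑' i : ℕ, q ^ (-2 * (i : ℤ)) * T i ω) ∂μ
      = phi11 (-lam⁻¹ * q⁻¹) (q ^ (-2 : ℤ)) (-lam⁻¹ * q ^ (-2 : ℤ)) *
          qExp (q ^ (-2 : ℤ)) (-lam / q) / qExp (q ^ (-2 : ℤ)) (1 / q) := by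
  have hq0 : (0:ℝ) < q := lt_trans one_pos hq
  have hqne : q ≠ 0 := ne_of_gt hq0
  set S : Ω → ℝ := fun ω => ∑' i : ℕ, q ^ (-2 * (i : ℤ)) * T i ω with hSdef
  set a : ℕ → ℝ := fun i => q ^ (-2 * (i : ℤ)) with hadef
  have hS_eq : ∀ ω, S ω = ∑' i, a i * T i ω := fun ω => rfl
  have ha_pos : ∀ i, 0 < a i := fun i => zpow_pos hq0 _
  have ha_eq : ∀ i, a i = (q^(-2:ℤ))^i := fun i => by
    show q ^ (-2 * (i:ℤ)) = _
    rw [zpow_mul, zpow_natCast]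
  have hr0 : (0:ℝ) < q^(-2:ℤ) := zpow_pos hq0 _
  have hr1 : q^(-2:ℤ) < 1 := by
    rw [qp_inv]
    exact inv_lt_one_of_one_lt₀ (by nlinarith)
  have ha_sum : Summable a := by
    refine (summable_geometric_of_lt_one hr0.le hr1).congr fun i => (ha_eq i).symm
  -- law of T i
  haveI hPexp : IsProbabilityMeasure (expMeasure 1) := isProbabilityMeasure_expMeasure one_pos
  have hmap : ∀ i, μ.map (T i) = expMeasure 1 := by
    intro i
    haveI : IsProbabilityMeasure (μ.map (T i)) := Measure.isProbabilityMeasure_map (hmeasT i).aemeasurable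
    refine MeasureTheory.Measure.ext_of_Iic (μ.map (T i)) (expMeasure 1) fun t => ?_
    rw [Measure.map_apply (hmeasT i) measurableSet_Iic, expMeasure_Iic]
    by_cases ht : 0 ≤ t
    · rw [if_pos ht, ← hlawT i t ht]
      rfl
    · rw [if_neg ht]
      rw [ENNReal.ofReal_zero]
      refine measure_mono_null (fun ω (hω : T i ω ≤ t) => ?_) (ae_iff.mp (hposT i))
      simp only [mem_setOf_eq]
      push_neg at ht ⊢
      linarith
  have hTlap : ∀ i, ∀ c : ℝ, 0 < c → ∫ ω, rexp (-(c * T i ω)) ∂μ = (c+1)⁻¹ := by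
    intro i c hc
    have h0 := laplace_exp hc
    rw [← hmap i, integral_map (hmeasT i).aemeasurable
      (Measurable.aestronglyMeasurable (by fun_prop))] at h0
    exact h0
  have hTmom : ∀ i, ∫⁻ ω, ENNReal.ofReal (T i ω) ∂μ = ∫⁻ x, ENNReal.ofReal x ∂(expMeasure 1) := by
    intro i
    rw [← hmap i, lintegral_map ENNReal.measurable_ofReal (hmeasT i)]
  -- a.e. goodness
  have hfin : ∀ᵐ ω ∂μ, (∑' i, ENNReal.ofReal (a i * T i ω)) < ⊤ := by
    refine ae_lt_top (Measurable.ennreal_tsum fun i =>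
      ((hmeasT i).const_mul (a i)).ennreal_ofReal) ?_
    rw [lintegral_tsum (fun i => (((hmeasT i).const_mul (a i)).ennreal_ofReal).aemeasurable)]
    have hterm : ∀ i, ∫⁻ ω, ENNReal.ofReal (a i * T i ω) ∂μ
        = ENNReal.ofReal (a i) * ∫⁻ x, ENNReal.ofReal x ∂(expMeasure 1) := by
      intro i
      rw [← hTmom i, ← lintegral_const_mul _ (hmeasT i).ennreal_ofReal]
      congr 1
      funext ω
      rw [ENNReal.ofReal_mul (ha_pos i).le]
    simp_rw [hterm]
    rw [ENNReal.tsum_mul_right]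
    exact ENNReal.mul_ne_top
      (by rw [← ENNReal.ofReal_tsum_of_nonneg (fun i => (ha_pos i).le) ha_sum]
          exact ENNReal.ofReal_ne_top)
      expMoment_ne_top
  have hGood : ∀ᵐ ω ∂μ, (∀ i, 0 ≤ T i ω) ∧ Summable (fun i => a i * T i ω) ∧ 0 ≤ S ω ∧
      S ω = (∑' i, ENNReal.ofReal (a i * T i ω)).toReal := by
    filter_upwards [hfin, ae_all_iff.2 hposT] with ω h1 h2
    have hnn : ∀ i, 0 ≤ a i * T i ω := fun i => mul_nonneg (ha_pos i).le (h2 i)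
    have hsummable : Summable fun i => a i * T i ω := by
      refine (ENNReal.summable_toReal h1.ne).congr fun i => ?_
      rw [ENNReal.toReal_ofReal (hnn i)]
    have hofreal : (∑' i, ENNReal.ofReal (a i * T i ω)) = ENNReal.ofReal (∑' i, a i * T i ω) :=
      (ENNReal.ofReal_tsum_of_nonneg hnn hsummable).symm
    exact ⟨h2, hsummable, tsum_nonneg hnn,
      by rw [hS_eq, hofreal, ENNReal.toReal_ofReal (tsum_nonneg hnn)]⟩
  have hSmeas : AEMeasurable S μ := by
    have hm : Measurable fun ω => (∑' i, ENNReal.ofReal (a i * T i ω)).toReal :=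
      (Measurable.ennreal_tsum fun i => ((hmeasT i).const_mul (a i)).ennreal_ofReal).ennreal_toReal
    refine hm.aemeasurable.congr ?_
    filter_upwards [hGood] with ω hω
    exact hω.2.2.2.symm
  -- Laplace transform of S
  have hL3 : ∀ c : ℝ, 0 < c → ∫ ω, rexp (-(c * S ω)) ∂μ = (∏' i, (1 + c * a i))⁻¹ := by
    intro c hc
    set X : ℕ → Ω → ℝ := fun i ω => rexp (-(c * (a i * T i ω))) with hX
    have hXmeas : ∀ i, Measurable (X i) := fun i => by
      have := hmeasT i; fun_prop
    have hXindep : iIndepFun X μ :=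
      hindepT.comp (fun i x => rexp (-(c * (a i * x)))) (fun i => by fun_prop)
    have hmean : ∀ i, ∫ ω, X i ω ∂μ = (1 + c * a i)⁻¹ := by
      intro i
      have h1 : X i = fun ω => rexp (-((c * a i) * T i ω)) := by
        funext ω; rw [hX]; ring_nf
      rw [h1, hTlap i (c * a i) (mul_pos hc (ha_pos i)), add_comm]
    have hpartial : ∀ n, ∫ ω, ∏ i ∈ Finset.range n, X i ω ∂μ
        = ∏ i ∈ Finset.range n, (1 + c * a i)⁻¹ := by
      intro n
      induction n with
      | zero => simp
      | succ n ih =>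
        have hind := hXindep.indepFun_prod_range_succ hXmeas n
        have heq : ∀ ω, ∏ i ∈ Finset.range (n+1), X i ω
            = (∏ j ∈ Finset.range n, X j) ω * X n ω := by
          intro ω
          rw [Finset.prod_apply, Finset.prod_range_succ]
        simp_rw [heq]
        have hprodmeas : Measurable (∏ j ∈ Finset.range n, X j) := by
          rw [show (∏ j ∈ Finset.range n, X j) = fun ω => ∏ j ∈ Finset.range n, X j ω from
            funext fun ω => Finset.prod_apply ω _ X]
          exact Finset.measurable_prod _ fun i _ => hXmeas i
        rw [hind.integral_fun_mul_eq_mul_integral hprodmeas.aestronglyMeasurable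
          ((hXmeas n).aestronglyMeasurable)]
        have : ∫ ω, (∏ j ∈ Finset.range n, X j) ω ∂μ = ∏ i ∈ Finset.range n, (1 + c * a i)⁻¹ := by
          rw [← ih]
          congr 1
          funext ω
          rw [Finset.prod_apply]
        rw [this, hmean n, Finset.prod_range_succ]
    have hdom : Tendsto (fun n => ∫ ω, ∏ i ∈ Finset.range n, X i ω ∂μ) atTop
        (𝓝 (∫ ω, rexp (-(c * S ω)) ∂μ)) := by
      refine tendsto_integral_of_dominated_convergence (fun _ => (1:ℝ))
        (fun n => (Finset.measurable_prod _ fun i _ => hXmeas i).aestronglyMeasurable)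
        (integrable_const 1) (fun n => ?_) ?_
      · filter_upwards [hGood] with ω hω
        rw [Real.norm_eq_abs, abs_of_nonneg (Finset.prod_nonneg fun i _ => (exp_pos _).le)]
        refine Finset.prod_le_one (fun i _ => (exp_pos _).le) (fun i _ => ?_)
        rw [Real.exp_le_one_iff]
        have := mul_nonneg (ha_pos i).le (hω.1 i)
        nlinarith
      · filter_upwards [hGood] with ω hω
        have h1 : ∀ n, ∏ i ∈ Finset.range n, X i ω
            = rexp (∑ i ∈ Finset.range n, -(c * (a i * T i ω))) := by
          intro n
          rw [Real.exp_sum]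
        simp_rw [h1]
        have hs : HasSum (fun i => a i * T i ω) (S ω) := by
          rw [hS_eq]; exact hω.2.1.hasSum
        have hs2 : HasSum (fun i => -(c * (a i * T i ω))) (-(c * S ω)) := (hs.mul_left c).neg
        exact (Real.continuous_exp.tendsto _).comp hs2.tendsto_sum_nat
    have hHP := hasProd_one_add (fun i => (mul_pos hc (ha_pos i)).le) (ha_sum.mul_left c)
    have h0 : (0:ℝ) < ∏' i, (1 + c * a i) := by
      rw [hHP.tprod_eq]; exact Real.exp_pos _
    have hprod : Tendsto (fun n => ∏ i ∈ Finset.range n, (1 + c * a i)⁻¹) atTop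
        (𝓝 ((∏' i, (1 + c * a i))⁻¹)) := by
      have h1 : Tendsto (fun n => ∏ i ∈ Finset.range n, (1 + c * a i)) atTop
          (𝓝 (∏' i, (1 + c * a i))) := by
        rw [hHP.tprod_eq]
        exact hHP.tendsto_prod_nat
      have := h1.inv₀ h0.ne'
      simpa [← Finset.prod_inv_distrib] using this
    have := (tendsto_congr hpartial).mp hdom
    exact tendsto_nhds_unique this hprod
  -- positivity facts
  have hPp_pos : ∀ k, 0 < qPoch (q^(-2:ℤ)) (q^(-2:ℤ)) k := by
    intro k
    refine Finset.prod_pos fun j _ => ?_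
    have h1 : (q^(-2:ℤ)) * (q^(-2:ℤ))^j ≤ (q^(-2:ℤ)) * 1 :=
      mul_le_mul_of_nonneg_left (pow_le_one₀ hr0.le hr1.le) hr0.le
    nlinarith
  have hD_nonneg : 0 ≤ qPochInf (1/q) (q^(-2:ℤ)) := by
    refine my_tprod_nonneg fun j => ?_
    have h1 : (1/q) * (q^(-2:ℤ))^j ≤ 1 * 1 := by
      refine mul_le_mul ?_ (pow_le_one₀ hr0.le hr1.le) (by positivity) one_pos.le
      rw [div_le_one hq0]; linarith
    nlinarith
  -- decomposition over N
  set D : ℝ := qPochInf (1/q) (q^(-2:ℤ)) with hDdef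
  set B : ℝ := qPochInf (-lam/q) (q^(-2:ℤ)) with hBdef
  set C : ℕ → ℝ := fun k => ∏ j ∈ Finset.range k, (1 + lam * q^(2*j+1)) with hCdef
  set g : ℕ → ℕ → ℝ := fun k n => if n = k then (1:ℝ) else 0 with hgdef
  set F : ℕ → Ω → ℝ := fun k ω => g k (N ω) * rexp (-lam * q^(2*(k:ℤ)-1) * S ω) with hFdef
  have hSnn : ∀ᵐ ω ∂μ, 0 ≤ S ω := by filter_upwards [hGood] with ω hω; exact hω.2.2.1
  have hck_pos : ∀ k : ℕ, 0 < lam * q^(2*(k:ℤ)-1) := fun k => mul_pos hlam (zpow_pos hq0 _)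
  have hexp_meas : ∀ k : ℕ, AEStronglyMeasurable
      (fun ω => rexp (-lam * q^(2*(k:ℤ)-1) * S ω)) μ := by
    intro k
    exact (Real.measurable_exp.comp_aemeasurable
      (hSmeas.const_mul (-lam * q^(2*(k:ℤ)-1)))).aestronglyMeasurable
  have hgN_meas : ∀ k, Measurable fun ω => g k (N ω) :=
    fun k => (measurable_from_top (f := g k)).comp hmeasN
  have hFmeas : ∀ k, AEStronglyMeasurable (F k) μ := by
    intro k
    exact ((hgN_meas k).aestronglyMeasurable).mul (hexp_meas k)
  have hpt : ∀ ω, rexp (-lam * q ^ (2 * (N ω : ℤ) - 1) * S ω) = ∑' k, F k ω := by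
    intro ω
    rw [tsum_eq_single (N ω) (fun b hb => by simp [hFdef, hgdef, Ne.symm hb])]
    simp [hFdef, hgdef]
  have hexp_le_one : ∀ k : ℕ, ∀ᵐ ω ∂μ, rexp (-lam * q^(2*(k:ℤ)-1) * S ω) ≤ 1 := by
    intro k
    filter_upwards [hSnn] with ω hω
    rw [Real.exp_le_one_iff]
    have h1 := hck_pos k
    nlinarith
  -- bound for integral_tsum
  have hbound : ∀ k : ℕ, ∫⁻ ω, ‖F k ω‖₊ ∂μ ≤ μ {ω | N ω = k} := by
    intro k
    have h1 : ∀ᵐ ω ∂μ, (‖F k ω‖₊ : ℝ≥0∞) ≤ ({ω : Ω | N ω = k}).indicator (fun _ => 1) ω := by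
      filter_upwards [hexp_le_one k] with ω hω
      by_cases hN : N ω = k
      · have : F k ω = rexp (-lam * q^(2*(k:ℤ)-1) * S ω) := by simp [hFdef, hgdef, hN]
        rw [Set.indicator_of_mem (show ω ∈ {ω : Ω | N ω = k} from hN)]
        have habs : ‖F k ω‖ ≤ 1 := by
          rw [this, Real.norm_eq_abs, abs_of_pos (Real.exp_pos _)]
          exact hω
        calc (‖F k ω‖₊ : ℝ≥0∞) = ENNReal.ofReal ‖F k ω‖ := (ofReal_norm _).symm
          _ ≤ ENNReal.ofReal 1 := ENNReal.ofReal_le_ofReal habs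
          _ = 1 := ENNReal.ofReal_one
      · have : F k ω = 0 := by simp [hFdef, hgdef, hN]
        simp [this]
    calc ∫⁻ ω, ‖F k ω‖₊ ∂μ ≤ ∫⁻ ω, ({ω : Ω | N ω = k}).indicator (fun _ => 1) ω ∂μ :=
          lintegral_mono_ae h1
      _ = μ {ω | N ω = k} := lintegral_indicator_one (hmeasN (measurableSet_singleton k))
  have hcover : ∑' k : ℕ, μ {ω | N ω = k} = 1 := by
    have hds : Pairwise (Function.onFun Disjoint fun k : ℕ => {ω : Ω | N ω = k}) := by
      intro i j hij
      rw [Function.onFun, Set.disjoint_left]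
      intro ω h1 h2
      exact hij (h1 ▸ h2 ▸ rfl)
    have hmeasSets : ∀ k : ℕ, MeasurableSet {ω : Ω | N ω = k} :=
      fun k => hmeasN (measurableSet_singleton k)
    rw [← measure_iUnion hds hmeasSets]
    have : (⋃ k : ℕ, {ω : Ω | N ω = k}) = Set.univ :=
      Set.eq_univ_iff_forall.2 fun ω => Set.mem_iUnion.2 ⟨N ω, rfl⟩
    rw [this, measure_univ]
  have hsum_ne : ∑' k : ℕ, ∫⁻ ω, ‖F k ω‖₊ ∂μ ≠ ⊤ := by
    refine ne_top_of_le_ne_top (by simp : (1:ℝ≥0∞) ≠ ⊤) ?_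
    calc ∑' k : ℕ, ∫⁻ ω, ‖F k ω‖₊ ∂μ ≤ ∑' k : ℕ, μ {ω | N ω = k} :=
          ENNReal.tsum_le_tsum hbound
      _ = 1 := hcover
  -- each term's integral
  have hterm : ∀ k : ℕ, ∫ ω, F k ω ∂μ = (μ {ω | N ω = k}).toReal *
      (∏' i, (1 + (lam * q^(2*(k:ℤ)-1)) * a i))⁻¹ := by
    intro k
    have hh : Measurable fun s : ℝ => rexp (-lam * q^(2*(k:ℤ)-1) * s) := by fun_prop
    have hI : IndepFun (g k ∘ N) ((fun s : ℝ => rexp (-lam * q^(2*(k:ℤ)-1) * s)) ∘ S) μ :=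
      hindepNS.comp (measurable_from_top (f := g k)) hh
    have h2 := hI.integral_mul_eq_mul_integral ((hgN_meas k).aestronglyMeasurable) (hexp_meas k)
    have hgind : ∫ ω, g k (N ω) ∂μ = (μ {ω | N ω = k}).toReal := by
      have he : (fun ω => g k (N ω)) = Set.indicator {ω : Ω | N ω = k} (fun _ => (1:ℝ)) := by
        funext ω
        by_cases h : N ω = k <;> simp [hgdef, Set.indicator_apply, h]
      rw [he, integral_indicator_const (1:ℝ) (show MeasurableSet {ω : Ω | N ω = k} from hmeasN (measurableSet_singleton k))]
      simp
      rfl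
    have hexp : ∫ ω, rexp (-lam * q^(2*(k:ℤ)-1) * S ω) ∂μ
        = (∏' i, (1 + (lam * q^(2*(k:ℤ)-1)) * a i))⁻¹ := by
      have he : (fun ω => rexp (-lam * q^(2*(k:ℤ)-1) * S ω))
          = fun ω => rexp (-((lam * q^(2*(k:ℤ)-1)) * S ω)) := by
        funext ω; congr 1; ring
      rw [he, hL3 _ (hck_pos k)]
    calc ∫ ω, F k ω ∂μ = ∫ ω, (g k ∘ N) ω * ((fun s : ℝ => rexp (-lam * q^(2*(k:ℤ)-1) * s)) ∘ S) ω ∂μ := rfl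
      _ = (∫ ω, (g k ∘ N) ω ∂μ) * ∫ ω, ((fun s : ℝ => rexp (-lam * q^(2*(k:ℤ)-1) * s)) ∘ S) ω ∂μ := h2
      _ = (μ {ω | N ω = k}).toReal * (∏' i, (1 + (lam * q^(2*(k:ℤ)-1)) * a i))⁻¹ := by
          rw [show (∫ ω, (g k ∘ N) ω ∂μ) = ∫ ω, g k (N ω) ∂μ from rfl, hgind]
          rw [show (∫ ω, ((fun s : ℝ => rexp (-lam * q^(2*(k:ℤ)-1) * s)) ∘ S) ω ∂μ)
            = ∫ ω, rexp (-lam * q^(2*(k:ℤ)-1) * S ω) ∂μ from rfl, hexp]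
  -- product splitting
  have hAk : ∀ k : ℕ, (∏' i, (1 + (lam * q^(2*(k:ℤ)-1)) * a i)) = C k * B := by
    intro k
    have hu : ∀ i, 0 ≤ (lam * q^(2*(k:ℤ)-1)) * a i :=
      fun i => (mul_pos (hck_pos k) (ha_pos i)).le
    have husum : Summable fun i => (lam * q^(2*(k:ℤ)-1)) * a i := ha_sum.mul_left _
    rw [tprod_one_add_split hu husum k]
    congr 1
    · have hCk0 : C k = ∏ j ∈ Finset.range k, (1 + lam * q^(2*j+1)) := rfl
      rw [hCk0, ← Finset.prod_range_reflect (fun m => 1 + lam * q^(2*m+1)) k]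
      refine Finset.prod_congr rfl fun j hj => ?_
      have hj' : j < k := Finset.mem_range.mp hj
      congr 1
      have haj : a j = q^(-2*(j:ℤ)) := rfl
      have hcast : ((k - 1 - j : ℕ) : ℤ) = (k:ℤ) - 1 - j := by omega
      rw [haj, mul_assoc, ← zpow_add₀ hqne,
        show q^(2*(k-1-j)+1 : ℕ) = q^(((2*(k-1-j)+1 : ℕ)) : ℤ) from (zpow_natCast q _).symm]
      congr 1
      push_cast [hcast]
      ring
    · rw [hBdef, qPochInf]
      refine tprod_congr fun i => ?_
      have haik : a (i + k) = q^(-2*((i:ℤ)+(k:ℤ))) := by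
        have hcast2 : (-2 * ((i + k : ℕ) : ℤ)) = -2 * ((i:ℤ)+(k:ℤ)) := by push_cast; ring
        show q ^ (-2 * ((i + k : ℕ) : ℤ)) = _
        rw [hcast2]
      rw [haik, mul_assoc, ← zpow_add₀ hqne]
      have e2 : ((q^(-2:ℤ) : ℝ))^i = q^(-2*(i:ℤ)) := by
        rw [← zpow_natCast (q^(-2:ℤ)) i, ← zpow_mul]
      rw [e2]
      have e3 : (2*(k:ℤ)-1) + (-2*((i:ℤ)+(k:ℤ))) = (-2*(i:ℤ)) + (-1) := by ring
      rw [e3, zpow_add₀ hqne, zpow_neg_one]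
      field_simp
      ring
  -- law of N, real version
  have hlawN' : ∀ k : ℕ, (μ {ω | N ω = k}).toReal
      = D * (q^(-(k:ℤ)) / qPoch (q^(-2:ℤ)) (q^(-2:ℤ)) k) := by
    intro k
    have hD1 : (1 : ℝ) / qExp (q^(-2:ℤ)) (1/q) = D := by
      rw [qExp, one_div_one_div, hDdef]
    rw [hlawN k, hD1, ENNReal.toReal_ofReal
      (mul_nonneg hD_nonneg (div_nonneg (zpow_pos hq0 _).le (hPp_pos k).le))]
  -- put everything together
  have hmain : ∫ ω, rexp (-lam * q ^ (2 * ((N ω : ℕ) : ℤ) - 1) * S ω) ∂μ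
      = ∑' k : ℕ, ∫ ω, F k ω ∂μ := by
    rw [show (fun ω => rexp (-lam * q ^ (2 * ((N ω : ℕ) : ℤ) - 1) * S ω))
      = fun ω => ∑' k, F k ω from funext hpt]
    exact integral_tsum hFmeas hsum_ne
  rw [hmain]
  -- right-hand side as a tsum
  have hqE : qExp (q^(-2:ℤ)) (-lam/q) / qExp (q^(-2:ℤ)) (1/q) = B⁻¹ * D := by
    rw [qExp, qExp, hBdef, hDdef, one_div, one_div, div_eq_mul_inv, inv_inv]
  rw [phi11, mul_div_assoc, hqE, ← tsum_mul_right]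
  refine tsum_congr fun k => ?_
  rw [hterm k, hAk k, hlawN' k, qterm_eq hq hlam k]
  have hCk : (∏ j ∈ Finset.range k, (1 + lam * q^(2*j+1))) = C k := by rw [hCdef]
  rw [hCk]
  have hqk : q^(-(k:ℤ)) = (q^k)⁻¹ := by
    rw [zpow_neg, zpow_natCast]
  rw [hqk, div_eq_mul_inv, div_eq_mul_inv, mul_inv, mul_inv]
  ring
end
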